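/- arXiv:2209.06200 — 16 statements merged into one kernel-verified Lean document; each statement's English description precedes it below -/
import Mathlib

section
/- The resolvent of the resolvent composition equals the composed resolvent: J_{L ▷ B} = L* ∘ J_B ∘ L, where L ▷ B = L* ▹ (B + Id) − Id, L* ▹ A = (L* ∘ A⁻¹ ∘ L)⁻¹ is the parallel composition, and J_B = (B + Id)⁻¹. -/
open scoped RealInnerProductSpace

noncomputable section

/-- Inverse of a set-valued operator. -/
def svInv {α β : Type*} (A : α → Set β) : β → Set α := fun y => {x | y ∈ A x}

/-- `A + Id`. -/
def plusId {E : Type*} [AddGroup E] (A : E → Set E) : E → Set E :=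
  fun x => (fun u => u + x) '' A x

/-- `A - Id`. -/
def minusId {E : Type*} [AddGroup E] (A : E → Set E) : E → Set E :=
  fun x => (fun u => u - x) '' A x

/-- Resolvent `J_A = (A + Id)⁻¹`. -/
def svResolvent {E : Type*} [AddGroup E] (A : E → Set E) : E → Set E :=
  svInv (plusId A)

/-- `L* ∘ A ∘ L` as a set-valued operator. -/
def svComp {H G : Type*} [NormedAddCommGroup H] [InnerProductSpace ℝ H] [CompleteSpace H]
    [NormedAddCommGroup G] [InnerProductSpace ℝ G] [CompleteSpace G]
    (L : H →L[ℝ] G) (A : G → Set G) : H → Set H :=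
  fun x => (ContinuousLinearMap.adjoint L) '' A (L x)

/-- Parallel composition `L* ▹ A = (L* ∘ A⁻¹ ∘ L)⁻¹`. -/
def parComp {H G : Type*} [NormedAddCommGroup H] [InnerProductSpace ℝ H] [CompleteSpace H]
    [NormedAddCommGroup G] [InnerProductSpace ℝ G] [CompleteSpace G]
    (L : H →L[ℝ] G) (A : G → Set G) : H → Set H :=
  svInv (svComp L (svInv A))

/-- Resolvent composition `L ▷ B = L* ▹ (B + Id) - Id`. -/
def rcomp {H G : Type*} [NormedAddCommGroup H] [InnerProductSpace ℝ H] [CompleteSpace H]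
    [NormedAddCommGroup G] [InnerProductSpace ℝ G] [CompleteSpace G]
    (L : H →L[ℝ] G) (B : G → Set G) : H → Set H :=
  minusId (parComp L (plusId B))

/-- Resolvent cocomposition `L ▶ B = (L ▷ B⁻¹)⁻¹`. -/
def ccomp {H G : Type*} [NormedAddCommGroup H] [InnerProductSpace ℝ H] [CompleteSpace H]
    [NormedAddCommGroup G] [InnerProductSpace ℝ G] [CompleteSpace G]
    (L : H →L[ℝ] G) (B : G → Set G) : H → Set H :=
  svInv (rcomp L (svInv B))

/-- Monotonicity of a set-valued operator. -/
def SVMonotone {E : Type*} [NormedAddCommGroup E] [InnerProductSpace ℝ E]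
    (A : E → Set E) : Prop :=
  ∀ x₁ u₁ x₂ u₂, u₁ ∈ A x₁ → u₂ ∈ A x₂ → 0 ≤ ⟪x₁ - x₂, u₁ - u₂⟫

/-- Maximal monotonicity of a set-valued operator. -/
def SVMaxMonotone {E : Type*} [NormedAddCommGroup E] [InnerProductSpace ℝ E]
    (A : E → Set E) : Prop :=
  SVMonotone A ∧ ∀ x u, (∀ y v, v ∈ A y → 0 ≤ ⟪x - y, u - v⟫) → u ∈ A x

variable {H G : Type*}
  [NormedAddCommGroup H] [InnerProductSpace ℝ H] [CompleteSpace H]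
  [NormedAddCommGroup G] [InnerProductSpace ℝ G] [CompleteSpace G]

/-- The svResolvent of the svResolvent composition: `J_{L ▷ B} = L* ∘ J_B ∘ L`. -/
theorem resolvent_rcomp (L : H →L[ℝ] G) (B : G → Set G) :
    svResolvent (rcomp L B) = svComp L (svResolvent B) := by
  funext x
  ext p
  simp only [svResolvent, svInv, plusId, rcomp, minusId, parComp, svComp, Set.mem_image,
    Set.mem_setOf_eq]
  constructor
  · rintro ⟨u, ⟨v, ⟨w, ⟨b, hb, hbw⟩, rfl⟩, rfl⟩, h⟩
    refine ⟨w, ⟨b, hb, ?_⟩, rfl⟩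
    have hv : v = x := by rw [sub_add_cancel] at h; exact h
    rw [← hv]; exact hbw
  · rintro ⟨w, ⟨b, hb, hbw⟩, rfl⟩
    exact ⟨x - (ContinuousLinearMap.adjoint L) w,
      ⟨x, ⟨w, ⟨b, hb, by rw [hbw]⟩, rfl⟩, rfl⟩, by abel⟩
end
end

section
/- If ‖L‖ ≤ 1, D = G, and T : G → G is firmly nonexpansive, then L* ∘ T ∘ L is maximally monotone. -/
open scoped RealInnerProductSpace

noncomputable section

variable {H G : Type*}
  [NormedAddCommGroup H] [InnerProductSpace ℝ H] [CompleteSpace H]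
  [NormedAddCommGroup G] [InnerProductSpace ℝ G] [CompleteSpace G]

/-- If `‖L‖ ≤ 1` and `T : G → G` is firmly nonexpansive, then `L* ∘ T ∘ L` is
maximally monotone. -/
theorem maxMonotone_comp (L : H →L[ℝ] G) (hL : ‖L‖ ≤ 1) (T : G → G)
    (hT : ∀ x₁ x₂, ‖T x₁ - T x₂‖ ^ 2 + ‖(x₁ - T x₁) - (x₂ - T x₂)‖ ^ 2 ≤ ‖x₁ - x₂‖ ^ 2) :
    SVMaxMonotone (fun x => {(ContinuousLinearMap.adjoint L) (T (L x))}) := by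

  have hadj : ‖(ContinuousLinearMap.adjoint L)‖ = ‖L‖ :=
    ContinuousLinearMap.adjoint.norm_map L
  set F : H → H := fun x => (ContinuousLinearMap.adjoint L) (T (L x)) with hF
  have hTlip : ∀ a b : G, ‖T a - T b‖ ≤ ‖a - b‖ := by
    intro a b
    have h := hT a b
    nlinarith [sq_nonneg (‖(a - T a) - (b - T b)‖), norm_nonneg (T a - T b),
      norm_nonneg (a - b)]
  have hTfirm : ∀ a b : G, ‖T a - T b‖ ^ 2 ≤ ⟪a - b, T a - T b⟫ := by
    intro a b
    have h := hT a b
    have e : (a - T a) - (b - T b) = (a - b) - (T a - T b) := by abel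
    rw [e] at h
    have expand : ‖(a - b) - (T a - T b)‖ ^ 2
        = ‖a - b‖ ^ 2 - 2 * ⟪a - b, T a - T b⟫ + ‖T a - T b‖ ^ 2 :=
      @norm_sub_sq_real _ _ _ (a - b) (T a - T b)
    linarith
  have hFlip : ∀ a b : H, ‖F a - F b‖ ≤ ‖a - b‖ := by
    intro a b
    have h1 : F a - F b = (ContinuousLinearMap.adjoint L) (T (L a) - T (L b)) := by
      simp [hF, map_sub]
    rw [h1]
    calc ‖(ContinuousLinearMap.adjoint L) (T (L a) - T (L b))‖
        ≤ ‖(ContinuousLinearMap.adjoint L)‖ * ‖T (L a) - T (L b)‖ :=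
          (ContinuousLinearMap.adjoint L).le_opNorm _
      _ ≤ 1 * ‖L a - L b‖ := by
          have h2 := hTlip (L a) (L b)
          have h3 : ‖(ContinuousLinearMap.adjoint L)‖ ≤ 1 := by rw [hadj]; exact hL
          have := norm_nonneg (T (L a) - T (L b))
          nlinarith [(ContinuousLinearMap.adjoint L).opNorm_nonneg]
      _ = ‖L (a - b)‖ := by rw [one_mul, map_sub]
      _ ≤ ‖L‖ * ‖a - b‖ := L.le_opNorm _
      _ ≤ 1 * ‖a - b‖ := by nlinarith [norm_nonneg (a - b)]
      _ = ‖a - b‖ := one_mul _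
  have hFmono : ∀ a b : H, 0 ≤ ⟪a - b, F a - F b⟫ := by
    intro a b
    have h1 : F a - F b = (ContinuousLinearMap.adjoint L) (T (L a) - T (L b)) := by
      simp [hF, map_sub]
    have h2 : ⟪a - b, F a - F b⟫ = ⟪L a - L b, T (L a) - T (L b)⟫ := by
      rw [h1, real_inner_comm, ContinuousLinearMap.adjoint_inner_left, map_sub,
        real_inner_comm]
    rw [h2]
    have := hTfirm (L a) (L b)
    nlinarith [sq_nonneg ‖T (L a) - T (L b)‖]
  constructor
  · intro x₁ u₁ x₂ u₂ h₁ h₂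
    simp only [Set.mem_singleton_iff] at h₁ h₂
    subst h₁; subst h₂
    exact hFmono x₁ x₂
  · intro x u h
    simp only [Set.mem_singleton_iff]
    set w : H := u - F x with hw
    have key := h (x + (1 / 2 : ℝ) • w) (F (x + (1 / 2 : ℝ) • w)) rfl
    have e1 : x - (x + (1 / 2 : ℝ) • w) = -((1 / 2 : ℝ) • w) := by abel
    rw [e1, inner_neg_left, real_inner_smul_left] at key
    have key2 : ⟪w, u - F (x + (1 / 2 : ℝ) • w)⟫ ≤ 0 := by linarith
    have e2 : u - F (x + (1 / 2 : ℝ) • w) = w + (F x - F (x + (1 / 2 : ℝ) • w)) := by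
      rw [hw]; abel
    rw [e2, inner_add_right, real_inner_self_eq_norm_sq] at key2
    have b1 : ⟪w, F x - F (x + (1 / 2 : ℝ) • w)⟫ ≥ -(‖w‖ * ‖F x - F (x + (1 / 2 : ℝ) • w)‖) := by
      have := abs_real_inner_le_norm w (F x - F (x + (1 / 2 : ℝ) • w))
      have h2 := neg_abs_le ⟪w, F x - F (x + (1 / 2 : ℝ) • w)⟫
      linarith
    have b2 : ‖F x - F (x + (1 / 2 : ℝ) • w)‖ ≤ (1 / 2 : ℝ) * ‖w‖ := by
      have := hFlip x (x + (1 / 2 : ℝ) • w)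
      have e3 : x - (x + (1 / 2 : ℝ) • w) = -((1 / 2 : ℝ) • w) := by abel
      rw [e3, norm_neg, norm_smul] at this
      simpa using this
    have hn : ‖w‖ = 0 := by nlinarith [norm_nonneg w]
    have : w = 0 := norm_eq_zero.mp hn
    have : u - F x = 0 := by rw [← hw]; exact this
    exact sub_eq_zero.mp this
end
end

section
/- If L : H → G is a surjective isometry (i.e., L⁻¹ = L*) and B : G → 2^G, then the resolvent composition L ▷ B coincides with both L* ∘ B ∘ L and the parallel composition L* ▹ B = (L* ∘ B⁻¹ ∘ L)⁻¹. -/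
open scoped RealInnerProductSpace

noncomputable section

variable {H G : Type*}
  [NormedAddCommGroup H] [InnerProductSpace ℝ H] [CompleteSpace H]
  [NormedAddCommGroup G] [InnerProductSpace ℝ G] [CompleteSpace G]

/-- For a surjective isometry `L`, `L ▷ B = L* ∘ B ∘ L = L* ▹ B`. -/
theorem rcomp_of_surjective_isometry (L : H →L[ℝ] G)
    (hsurj : Function.Surjective L) (hiso : ∀ x, ‖L x‖ = ‖x‖) (B : G → Set G) :
    rcomp L B = svComp L B ∧ rcomp L B = parComp L B := by
  have hinner : ∀ x y : H, ⟪L x, L y⟫ = ⟪x, y⟫ := fun x y =>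
    LinearIsometry.inner_map_map ⟨L.toLinearMap, hiso⟩ x y
  set A := ContinuousLinearMap.adjoint L with hA
  have haL : ∀ x : H, A (L x) = x := by
    intro x
    apply ext_inner_right ℝ
    intro y
    rw [hA, ContinuousLinearMap.adjoint_inner_left]
    exact hinner x y
  have hla : ∀ g : G, L (A g) = g := by
    intro g
    obtain ⟨x, rfl⟩ := hsurj g
    rw [haL]
  have hpar : ∀ (C : G → Set G) (x : H), parComp L C x = {u | L u ∈ C (L x)} := by
    intro C x
    ext u
    simp only [parComp, svComp, svInv, Set.mem_image, Set.mem_setOf_eq]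
    constructor
    · rintro ⟨w, hw, rfl⟩
      rwa [hla]
    · intro h
      exact ⟨L x, h, haL x⟩
  have h1 : rcomp L B = svComp L B := by
    funext x
    ext v
    simp only [rcomp, minusId, Set.mem_image, hpar, plusId, Set.mem_setOf_eq, svComp]
    constructor
    · rintro ⟨u, ⟨b, hb, hbu⟩, rfl⟩
      refine ⟨b, hb, ?_⟩
      have h2 := congrArg A hbu
      rw [haL, map_add, haL] at h2
      rw [← h2, add_sub_cancel_right]
    · rintro ⟨b, hb, rfl⟩
      refine ⟨A b + x, ⟨b, hb, ?_⟩, add_sub_cancel_right _ _⟩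
      rw [map_add, hla]
  refine ⟨h1, ?_⟩
  rw [h1]
  funext x
  ext u
  simp only [svComp, Set.mem_image, hpar, Set.mem_setOf_eq]
  constructor
  · rintro ⟨b, hb, rfl⟩
    rwa [hla]
  · intro h
    exact ⟨L u, h, haL u⟩
end
end

section
/- For L = α⁻¹ Id_H with α ∈ ℝ \ {0} and B : H → 2^H, the resolvent composition satisfies L ▷ B = (α² − 1) Id_H + α (B ∘ (α Id_H)). -/
open scoped RealInnerProductSpace

noncomputable section

variable {H G : Type*}
  [NormedAddCommGroup H] [InnerProductSpace ℝ H] [CompleteSpace H]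
  [NormedAddCommGroup G] [InnerProductSpace ℝ G] [CompleteSpace G]

/-- For `L = α⁻¹ Id`, one has `L ▷ B = (α² − 1) Id + α (B ∘ (α Id))`. -/
theorem rcomp_inv_smul_id (α : ℝ) (hα : α ≠ 0) (B : H → Set H) :
    rcomp ((α⁻¹ : ℝ) • (ContinuousLinearMap.id ℝ H)) B =
      fun x => (fun v => (α ^ 2 - 1) • x + α • v) '' B (α • x) := by
  have hadj : ContinuousLinearMap.adjoint ((α⁻¹ : ℝ) • (ContinuousLinearMap.id ℝ H)) =
      (α⁻¹ : ℝ) • ContinuousLinearMap.id ℝ H := by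
    rw [map_smulₛₗ, ContinuousLinearMap.adjoint_id]; simp
  funext x
  ext u
  simp only [rcomp, minusId, parComp, svComp, svInv, plusId, hadj, Set.mem_image,
    Set.mem_setOf_eq, ContinuousLinearMap.smul_apply, ContinuousLinearMap.id_apply]
  constructor
  · rintro ⟨w, ⟨z, ⟨b, hb, hbz⟩, hz⟩, rfl⟩
    have hz' : z = α • x := by
      have := congrArg (fun t => α • t) hz
      simpa [smul_smul, hα] using this
    subst hz'
    have hw : w = α • b + (α * α) • x := by
      have := congrArg (fun t => α • t) hbz
      simpa [smul_smul, hα, smul_add] using this.symm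
    exact ⟨b, hb, by rw [hw]; module⟩
  · rintro ⟨b, hb, rfl⟩
    refine ⟨α • b + (α * α) • x, ⟨α • x, ⟨b, hb, ?_⟩, ?_⟩, ?_⟩
    · simp [smul_add, smul_smul, hα]
    · simp [smul_add, smul_smul, hα]
    · module
end
end

section
/- The inverse of the resolvent composition equals the resolvent cocomposition of the inverse: (L ▷ B)⁻¹ = L ▶ (B⁻¹) = (Id_H − L* ∘ J_B ∘ L)⁻¹ − Id_H. -/
open scoped RealInnerProductSpace

noncomputable section

variable {H G : Type*}
  [NormedAddCommGroup H] [InnerProductSpace ℝ H] [CompleteSpace H]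
  [NormedAddCommGroup G] [InnerProductSpace ℝ G] [CompleteSpace G]

/-- `(L ▷ B)⁻¹ = L ▶ (B⁻¹) = (Id − L* ∘ J_B ∘ L)⁻¹ − Id`. -/
theorem inv_rcomp (L : H →L[ℝ] G) (B : G → Set G) :
    svInv (rcomp L B) = ccomp L (svInv B) ∧
    svInv (rcomp L B) =
      minusId (svInv (fun x => (fun u => x - u) '' svComp L (svResolvent B) x)) := by
  have hinv : svInv (svInv B) = B := by
    funext x; ext y; rfl
  constructor
  · unfold ccomp
    rw [hinv]
  · funext x
    ext u
    constructor
    · rintro ⟨w, ⟨v, hv, hvw⟩, hwx⟩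
      have hwx' : w - u = x := hwx
      have h1 : w - ContinuousLinearMap.adjoint L v = x := by rw [hvw]; exact hwx'
      have h2 : w - x = u := by rw [← hwx']; abel
      exact ⟨w, ⟨ContinuousLinearMap.adjoint L v, ⟨v, hv, rfl⟩, h1⟩, h2⟩
    · rintro ⟨t, ⟨s, ⟨v, hv, rfl⟩, hs⟩, htx⟩
      have htx' : t - x = u := htx
      have hs' : t - ContinuousLinearMap.adjoint L v = x := hs
      have huv : ContinuousLinearMap.adjoint L v = u := by
        rw [← hs'] at htx'; rw [← htx']; abel
      have h2 : t - u = x := by rw [← htx']; abel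
      exact ⟨t, ⟨v, hv, huv⟩, h2⟩
end
end

section
/- The resolvent of the resolvent cocomposition satisfies J_{L ▶ B} = Id_H − L* ∘ L + L* ∘ J_B ∘ L. -/
open scoped RealInnerProductSpace

noncomputable section

variable {H G : Type*}
  [NormedAddCommGroup H] [InnerProductSpace ℝ H] [CompleteSpace H]
  [NormedAddCommGroup G] [InnerProductSpace ℝ G] [CompleteSpace G]

/-- `J_{L ▶ B} = Id − L* ∘ L + L* ∘ J_B ∘ L`. -/
theorem resolvent_ccomp (L : H →L[ℝ] G) (B : G → Set G) :
    svResolvent (ccomp L B) = fun x =>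
      (fun p => x - (ContinuousLinearMap.adjoint L) (L x) +
        (ContinuousLinearMap.adjoint L) p) '' svResolvent B (L x) := by
  funext x
  ext u
  simp only [svResolvent, svInv, plusId, minusId, parComp, svComp, rcomp, ccomp,
    Set.mem_image, Set.mem_setOf_eq]
  constructor
  · rintro ⟨x₁, ⟨x₂, ⟨w, ⟨p, hwp, hsum⟩, rfl⟩, rfl⟩, hux⟩
    obtain rfl : x₂ = x := by rw [← hux]; abel
    exact ⟨p, ⟨w, hwp, by rw [add_comm]; exact hsum⟩, by rw [← hsum]; simp only [map_add]; abel⟩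
  · rintro ⟨p, ⟨w, hwp, hsum⟩, rfl⟩
    refine ⟨(ContinuousLinearMap.adjoint L) w, ⟨x, ⟨w, ⟨p, hwp, by rw [add_comm]; exact hsum⟩, rfl⟩, ?_⟩, ?_⟩ <;>
      rw [← hsum] <;> simp only [map_add] <;> abel
end
end

section
/- The zero set of the resolvent composition equals the fixed point set of the composed resolvent: zer(L ▷ B) = Fix(L* ∘ J_B ∘ L). -/
open scoped RealInnerProductSpace

noncomputable section

variable {H G : Type*}
  [NormedAddCommGroup H] [InnerProductSpace ℝ H] [CompleteSpace H]
  [NormedAddCommGroup G] [InnerProductSpace ℝ G] [CompleteSpace G]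

/-- `zer (L ▷ B) = Fix (L* ∘ J_B ∘ L)`. -/
theorem zer_rcomp (L : H →L[ℝ] G) (B : G → Set G) :
    {x : H | (0 : H) ∈ rcomp L B x} = {x : H | x ∈ svComp L (svResolvent B) x} := by
  ext x
  constructor
  · rintro ⟨u, hu, h⟩
    rw [sub_eq_zero] at h
    subst h
    exact hu
  · intro h
    exact ⟨x, h, sub_self x⟩
end
end

section
/- Composition rule for resolvent compositions: for Q : H → G and L : G → K bounded linear and B : K → 2^K set-valued, Q ▷ (L ▷ B) = (L ∘ Q) ▷ B. -/
open scoped RealInnerProductSpace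

noncomputable section

variable {H G K : Type*}
  [NormedAddCommGroup H] [InnerProductSpace ℝ H] [CompleteSpace H]
  [NormedAddCommGroup G] [InnerProductSpace ℝ G] [CompleteSpace G]
  [NormedAddCommGroup K] [InnerProductSpace ℝ K] [CompleteSpace K]

/-- `Q ▷ (L ▷ B) = (L ∘ Q) ▷ B`. -/
theorem rcomp_rcomp (Q : H →L[ℝ] G) (L : G →L[ℝ] K) (B : K → Set K) :
    rcomp Q (rcomp L B) = rcomp (L.comp Q) B := by
  funext x
  ext u
  simp only [rcomp, minusId, parComp, svComp, svInv, plusId, Set.mem_image,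
    Set.mem_setOf_eq, ContinuousLinearMap.adjoint_comp, ContinuousLinearMap.coe_comp',
    Function.comp_apply]
  constructor
  · rintro ⟨p, ⟨y, ⟨c, ⟨q, ⟨w, ⟨b, hb, hbw⟩, rfl⟩, hc⟩, hQ⟩, rfl⟩, rfl⟩
    have hq : q = Q p := by rw [← hQ, ← hc]; abel
    exact ⟨p, ⟨w, ⟨b, hb, by rw [hbw, hq]⟩, rfl⟩, rfl⟩
  · rintro ⟨p, ⟨w, ⟨b, hb, hQ⟩, rfl⟩, rfl⟩
    refine ⟨p, ⟨ContinuousLinearMap.adjoint L w, ⟨Q p - ContinuousLinearMap.adjoint L w,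
      ⟨Q p, ⟨w, ⟨b, hb, hQ⟩, rfl⟩, rfl⟩, by abel⟩, rfl⟩, rfl⟩
end
end

section
/- If ‖L‖ ≤ 1 and B : G → 2^G is monotone, then the resolvent composition L ▷ B is monotone. -/
open scoped RealInnerProductSpace

noncomputable section

variable {H G : Type*}
  [NormedAddCommGroup H] [InnerProductSpace ℝ H] [CompleteSpace H]
  [NormedAddCommGroup G] [InnerProductSpace ℝ G] [CompleteSpace G]

/-- If `‖L‖ ≤ 1` and `B` is monotone, then `L ▷ B` is monotone. -/
theorem rcomp_monotone (L : H →L[ℝ] G) (hL : ‖L‖ ≤ 1) (B : G → Set G)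
    (hB : SVMonotone B) : SVMonotone (rcomp L B) := by
  intro x₁ u₁ x₂ u₂ h₁ h₂
  obtain ⟨w₁, hw₁, rfl⟩ := h₁
  obtain ⟨w₂, hw₂, rfl⟩ := h₂
  obtain ⟨v₁, hv₁, rfl⟩ := hw₁
  obtain ⟨v₂, hv₂, rfl⟩ := hw₂
  obtain ⟨b₁, hb₁, hbe₁⟩ := hv₁
  obtain ⟨b₂, hb₂, hbe₂⟩ := hv₂
  set L' := ContinuousLinearMap.adjoint L with hL'
  have hmono := hB v₁ b₁ v₂ b₂ hb₁ hb₂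
  have hb1 : b₁ = L w₁ - v₁ := eq_sub_of_add_eq hbe₁
  have hb2 : b₂ = L w₂ - v₂ := eq_sub_of_add_eq hbe₂
  rw [hb1, hb2] at hmono
  have key : ‖v₁ - v₂‖ ^ 2 ≤ ⟪ v₁ - v₂, L w₁ - L w₂ ⟫ := by
    have : L w₁ - v₁ - (L w₂ - v₂) = (L w₁ - L w₂) - (v₁ - v₂) := by abel
    rw [this, inner_sub_right] at hmono
    have := real_inner_self_eq_norm_sq (v₁ - v₂)
    linarith
  have hadj : ⟪ v₁ - v₂, L w₁ - L w₂ ⟫ = ⟪ L' v₁ - L' v₂, w₁ - w₂ ⟫ := by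
    rw [← map_sub, ← map_sub, hL', ContinuousLinearMap.adjoint_inner_left,
      real_inner_comm]
  have hnorm : ‖L' v₁ - L' v₂‖ ≤ ‖v₁ - v₂‖ := by
    rw [← map_sub]
    calc ‖L' (v₁ - v₂)‖ ≤ ‖L'‖ * ‖v₁ - v₂‖ := L'.le_opNorm _
    _ ≤ 1 * ‖v₁ - v₂‖ := by
        apply mul_le_mul_of_nonneg_right _ (norm_nonneg _)
        rw [hL', show ‖ContinuousLinearMap.adjoint L‖ = ‖L‖ from
          LinearIsometryEquiv.norm_map _ L]; exact hL
    _ = ‖v₁ - v₂‖ := one_mul _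
  have hgoal : ⟪ L' v₁ - L' v₂, w₁ - L' v₁ - (w₂ - L' v₂) ⟫
      = ⟪ L' v₁ - L' v₂, w₁ - w₂ ⟫ - ‖L' v₁ - L' v₂‖ ^ 2 := by
    have h1 : w₁ - L' v₁ - (w₂ - L' v₂) = (w₁ - w₂) - (L' v₁ - L' v₂) := by abel
    rw [h1, inner_sub_right, real_inner_self_eq_norm_sq]
  rw [hgoal, ← hadj]
  have hsq : ‖L' v₁ - L' v₂‖ ^ 2 ≤ ‖v₁ - v₂‖ ^ 2 :=
    pow_le_pow_left₀ (norm_nonneg _) hnorm 2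
  linarith
end
end

section
/- If 0 < ‖L‖, α ≥ 0, B − α Id_G is monotone, ‖L‖ < √(α+1), and B is monotone, then L ▷ B is β-strongly monotone with β = (α+1)‖L‖⁻² − 1 > 0. -/
open scoped RealInnerProductSpace

noncomputable section

variable {H G : Type*}
  [NormedAddCommGroup H] [InnerProductSpace ℝ H] [CompleteSpace H]
  [NormedAddCommGroup G] [InnerProductSpace ℝ G] [CompleteSpace G]

/-- If `B` is monotone, `B − α Id` is monotone, `0 < ‖L‖ < √(α+1)`, then `L ▷ B` is
`β`-strongly monotone with `β = (α+1)‖L‖⁻² − 1 > 0`. -/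
theorem rcomp_stronglyMonotone (L : H →L[ℝ] G) (hL0 : 0 < ‖L‖) (α : ℝ) (hα : 0 ≤ α)
    (B : G → Set G) (hmon : SVMonotone B)
    (hstr : ∀ y₁ v₁ y₂ v₂, v₁ ∈ B y₁ → v₂ ∈ B y₂ →
      α * ‖y₁ - y₂‖ ^ 2 ≤ ⟪y₁ - y₂, v₁ - v₂⟫)
    (hLb : ‖L‖ < Real.sqrt (α + 1)) :
    0 < (α + 1) / ‖L‖ ^ 2 - 1 ∧
      ∀ x₁ u₁ x₂ u₂, u₁ ∈ rcomp L B x₁ → u₂ ∈ rcomp L B x₂ →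
        ((α + 1) / ‖L‖ ^ 2 - 1) * ‖x₁ - x₂‖ ^ 2 ≤ ⟪x₁ - x₂, u₁ - u₂⟫ := by
  have hL2 : (0:ℝ) < ‖L‖ ^ 2 := by positivity
  have hsq : ‖L‖ ^ 2 < α + 1 := by
    have := (Real.lt_sqrt hL0.le).mp hLb
    linarith
  constructor
  · have : (1:ℝ) < (α + 1) / ‖L‖ ^ 2 := (one_lt_div hL2).mpr hsq
    linarith
  · intro x₁ u₁ x₂ u₂ h₁ h₂
    obtain ⟨w₁, hw₁, rfl⟩ := h₁
    obtain ⟨w₂, hw₂, rfl⟩ := h₂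
    obtain ⟨y₁, hy₁, hx₁⟩ := hw₁
    obtain ⟨y₂, hy₂, hx₂⟩ := hw₂
    obtain ⟨v₁, hv₁, hLw₁⟩ := hy₁
    obtain ⟨v₂, hv₂, hLw₂⟩ := hy₂
    have hnorm : ‖x₁ - x₂‖ ≤ ‖L‖ * ‖y₁ - y₂‖ := by
      rw [← hx₁, ← hx₂, ← map_sub]
      calc ‖(ContinuousLinearMap.adjoint L) (y₁ - y₂)‖
          ≤ ‖ContinuousLinearMap.adjoint L‖ * ‖y₁ - y₂‖ :=
            (ContinuousLinearMap.adjoint L).le_opNorm _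
        _ = ‖L‖ * ‖y₁ - y₂‖ := by
            rw [ContinuousLinearMap.adjoint]
            simp
    have key : ⟪x₁ - x₂, (w₁ - x₁) - (w₂ - x₂)⟫ =
        ⟪y₁ - y₂, v₁ - v₂⟫ + ‖y₁ - y₂‖ ^ 2 - ‖x₁ - x₂‖ ^ 2 := by
      have h1 : ⟪x₁ - x₂, (w₁ - x₁) - (w₂ - x₂)⟫ =
          ⟪x₁ - x₂, w₁ - w₂⟫ - ⟪x₁ - x₂, x₁ - x₂⟫ := by
        rw [← inner_sub_right]; congr 1; abel
      have h2 : ⟪x₁ - x₂, w₁ - w₂⟫ = ⟪y₁ - y₂, L w₁ - L w₂⟫ := by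
        rw [← hx₁, ← hx₂, ← map_sub, ContinuousLinearMap.adjoint_inner_left, map_sub]
      rw [h1, h2, ← hLw₁, ← hLw₂, real_inner_self_eq_norm_sq]
      have : (v₁ + y₁) - (v₂ + y₂) = (v₁ - v₂) + (y₁ - y₂) := by abel
      rw [this, inner_add_right, real_inner_self_eq_norm_sq]
    have hsv := hstr y₁ v₁ y₂ v₂ hv₁ hv₂
    have h2 : ‖x₁ - x₂‖ ^ 2 ≤ ‖L‖ ^ 2 * ‖y₁ - y₂‖ ^ 2 := by
      have h0 : (0:ℝ) ≤ ‖x₁ - x₂‖ := norm_nonneg _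
      nlinarith [norm_nonneg (y₁ - y₂)]
    rw [key, div_sub_one (ne_of_gt hL2), div_mul_eq_mul_div, div_le_iff₀ hL2]
    nlinarith [norm_nonneg (x₁ - x₂), norm_nonneg (y₁ - y₂)]
end
end

section
/- If ‖L‖ ≤ 1 and B : G → 2^G is maximally monotone, then the resolvent composition L ▷ B : H → 2^H is maximally monotone. -/
open scoped RealInnerProductSpace

noncomputable section

variable {H G : Type*}
  [NormedAddCommGroup H] [InnerProductSpace ℝ H] [CompleteSpace H]
  [NormedAddCommGroup G] [InnerProductSpace ℝ G] [CompleteSpace G]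


section Aux

open Finset Metric Filter

variable {E : Type*} [NormedAddCommGroup E] [InnerProductSpace ℝ E]

lemma inner_eq_half (a b : E) : ⟪a, b⟫ = (‖a‖^2 + ‖b‖^2 - ‖a - b‖^2)/2 := by
  rw [@norm_sub_sq_real E]; ring

set_option maxHeartbeats 1000000 in
lemma my_finite_kirszbraun [CompleteSpace E] {ι : Type*} (F : Finset ι) (s y : ι → E)
    (hlip : ∀ i ∈ F, ∀ j ∈ F, ‖y i - y j‖ ≤ ‖s i - s j‖) (g : E) :
    ∃ q : E, ∀ i ∈ F, ‖q - y i‖ ≤ ‖g - s i‖ := by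
  classical
  rcases F.eq_empty_or_nonempty with rfl | hF
  · exact ⟨g, by simp⟩
  set K : Set E := convexHull ℝ (y '' ↑F) with hK
  have hKcomp : IsCompact K := (Set.toFinite (y '' ↑F)).isCompact_convexHull ℝ
  have hKconv : Convex ℝ K := convex_convexHull ℝ _
  obtain ⟨i₁, hi₁⟩ := id hF
  have hKne : K.Nonempty := ⟨y i₁, subset_convexHull ℝ _ ⟨i₁, by simpa using hi₁, rfl⟩⟩
  set φ : E → ℝ := fun q => F.sup' hF (fun i => ‖q - y i‖^2 - ‖g - s i‖^2) with hφ
  have hφc : Continuous φ := by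
    apply Continuous.finset_sup'_apply hF
    intro i _
    have : Continuous fun q : E => ‖q - y i‖^2 - ‖g - s i‖^2 := by fun_prop
    exact this
  obtain ⟨q, hqK, hqmin⟩ := hKcomp.exists_isMinOn hKne hφc.continuousOn
  set μ := φ q with hμdef
  suffices hμ : μ ≤ 0 by
    refine ⟨q, fun i hi => ?_⟩
    have h1 : ‖q - y i‖^2 - ‖g - s i‖^2 ≤ μ :=
      Finset.le_sup' (fun i => ‖q - y i‖^2 - ‖g - s i‖^2) hi
    nlinarith [norm_nonneg (q - y i), norm_nonneg (g - s i)]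
  by_contra hμ
  push_neg at hμ
  set I := F.filter (fun i => ‖q - y i‖^2 - ‖g - s i‖^2 = μ) with hI
  have hIsub : I ⊆ F := filter_subset _ _
  obtain ⟨i₀, hi₀F, hi₀⟩ := Finset.exists_mem_eq_sup' hF (fun i => ‖q - y i‖^2 - ‖g - s i‖^2)
  have hi₀I : i₀ ∈ I := mem_filter.2 ⟨hi₀F, hi₀.symm⟩
  set KI : Set E := convexHull ℝ (y '' ↑I) with hKI
  have hKIconv : Convex ℝ KI := convex_convexHull ℝ _
  have hKIne : KI.Nonempty := ⟨y i₀, subset_convexHull ℝ _ ⟨i₀, by simpa using hi₀I, rfl⟩⟩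
  have hKIsub : KI ⊆ K := convexHull_mono (Set.image_mono (by exact_mod_cast hIsub))
  obtain ⟨p, hpKI, hp⟩ := exists_norm_eq_iInf_of_complete_convex hKIne
    ((Set.toFinite (y '' ↑I)).isCompact_convexHull ℝ).isComplete hKIconv q
  rw [norm_eq_iInf_iff_real_inner_le_zero hKIconv hpKI] at hp
  by_cases hqp : q = p
  · -- q ∈ KI : convex combination contradiction
    have hqKI : q ∈ KI := hqp ▸ hpKI
    rw [hKI, mem_convexHull_iff_exists_fintype] at hqKI
    obtain ⟨κ, hκ, c, z, hc0, hc1, hz, hsum⟩ := hqKI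
    choose f hfI hfy using hz
    have hfF : ∀ j, f j ∈ F := fun j => hIsub (by exact_mod_cast hfI j)
    have hfI' : ∀ j, f j ∈ I := fun j => by exact_mod_cast hfI j
    have hact : ∀ j, ‖q - z j‖^2 = μ + ‖g - s (f j)‖^2 := by
      intro j
      have h2 := (Finset.mem_filter.1 (hfI' j)).2
      rw [hfy j] at h2
      linarith
    have hkey : ∀ j k, μ + ⟪g - s (f j), g - s (f k)⟫ ≤ ⟪q - z j, q - z k⟫ := by
      intro j k
      have h1 : ‖z j - z k‖ ≤ ‖s (f j) - s (f k)‖ := by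
        rw [← hfy j, ← hfy k]; exact hlip _ (hfF j) _ (hfF k)
      have e1 : ⟪q - z j, q - z k⟫ = (‖q - z j‖^2 + ‖q - z k‖^2 - ‖z k - z j‖^2)/2 := by
        rw [inner_eq_half, show q - z j - (q - z k) = z k - z j by abel]
      have e2 : ⟪g - s (f j), g - s (f k)⟫
          = (‖g - s (f j)‖^2 + ‖g - s (f k)‖^2 - ‖s (f k) - s (f j)‖^2)/2 := by
        rw [inner_eq_half, show g - s (f j) - (g - s (f k)) = s (f k) - s (f j) by abel]
      have h1' : ‖z k - z j‖ ≤ ‖s (f k) - s (f j)‖ := by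
        rw [norm_sub_rev, norm_sub_rev (s (f k))]; exact h1
      nlinarith [hact j, hact k, norm_nonneg (z k - z j), norm_nonneg (s (f k) - s (f j))]
    have hzsum : (∑ j, c j • (q - z j)) = 0 := by
      have h3 : (∑ j, c j • (q - z j)) = (∑ j, c j) • q - ∑ j, c j • z j := by
        rw [Finset.sum_smul, ← Finset.sum_sub_distrib]
        exact Finset.sum_congr rfl fun j _ => smul_sub _ _ _
      rw [h3, hc1, hsum, one_smul, sub_self]
    have expand : (0:ℝ) = ∑ j, ∑ k, c j * c k * ⟪q - z j, q - z k⟫ := by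
      calc (0:ℝ) = ⟪(∑ j, c j • (q - z j)), (∑ k, c k • (q - z k))⟫ := by
            rw [hzsum]; simp
        _ = ∑ j, ∑ k, c j * c k * ⟪q - z j, q - z k⟫ := by
            rw [sum_inner]
            refine Finset.sum_congr rfl fun j _ => ?_
            rw [inner_sum]
            refine Finset.sum_congr rfl fun k _ => ?_
            rw [real_inner_smul_left, real_inner_smul_right]; ring
    have expand2 : ‖∑ j, c j • (g - s (f j))‖^2
        = ∑ j, ∑ k, c j * c k * ⟪g - s (f j), g - s (f k)⟫ := by
      rw [← real_inner_self_eq_norm_sq, sum_inner]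
      refine Finset.sum_congr rfl fun j _ => ?_
      rw [inner_sum]
      refine Finset.sum_congr rfl fun k _ => ?_
      rw [real_inner_smul_left, real_inner_smul_right]; ring
    have hbound : ∑ j, ∑ k, c j * c k * (μ + ⟪g - s (f j), g - s (f k)⟫)
        ≤ ∑ j, ∑ k, c j * c k * ⟪q - z j, q - z k⟫ :=
      Finset.sum_le_sum fun j _ => Finset.sum_le_sum fun k _ =>
        mul_le_mul_of_nonneg_left (hkey j k) (mul_nonneg (hc0 j) (hc0 k))
    have hsplit : (∑ j, ∑ k, c j * c k * (μ + ⟪g - s (f j), g - s (f k)⟫))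
        = μ * ((∑ j, c j) * (∑ k, c k))
          + ∑ j, ∑ k, c j * c k * ⟪g - s (f j), g - s (f k)⟫ := by
      rw [Finset.sum_mul_sum, Finset.mul_sum, ← Finset.sum_add_distrib]
      refine Finset.sum_congr rfl fun j _ => ?_
      rw [Finset.mul_sum, ← Finset.sum_add_distrib]
      exact Finset.sum_congr rfl fun k _ => by ring
    rw [hc1, one_mul, mul_one] at hsplit
    have hS : 0 ≤ ‖∑ j, c j • (g - s (f j))‖^2 := sq_nonneg _
    linarith [hbound, expand, hsplit, expand2.symm ▸ hS]
  · -- q ∉ KI : descent direction contradiction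
    set d := p - q with hd
    have hdne : d ≠ 0 := sub_ne_zero.2 (Ne.symm hqp)
    have hd2 : 0 < ‖d‖^2 := by
      have := norm_pos_iff.mpr hdne; positivity
    have hkey : ∀ i ∈ I, ⟪q - y i, d⟫ ≤ -‖d‖^2 := by
      intro i hi
      have h1 : ⟪q - p, y i - p⟫ ≤ 0 :=
        hp _ (subset_convexHull ℝ _ ⟨i, by simpa using hi, rfl⟩)
      have e1 : ⟪q - p, d⟫ = -‖d‖^2 := by
        rw [show q - p = -d by rw [hd]; abel, inner_neg_left, real_inner_self_eq_norm_sq]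
      have e2 : ⟪p - y i, d⟫ ≤ 0 := by
        have h4 : ⟪p - y i, d⟫ = ⟪q - p, y i - p⟫ := by
          rw [hd, show p - y i = -(y i - p) by abel, show p - q = -(q - p) by abel,
            inner_neg_neg, real_inner_comm]
        rw [h4]; exact h1
      have e3 : ⟪q - y i, d⟫ = ⟪q - p, d⟫ + ⟪p - y i, d⟫ := by
        rw [← inner_add_left, show q - p + (p - y i) = q - y i by abel]
      rw [e3, e1]; linarith
    set Cb : ℝ := F.sup' hF (fun j => 2*‖q - y j‖*‖d‖) + ‖d‖^2 + 1 with hCb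
    have hCsup : 0 ≤ F.sup' hF (fun j => 2*‖q - y j‖*‖d‖) :=
      le_trans (by positivity) (Finset.le_sup' (fun j => 2*‖q - y j‖*‖d‖) hi₁)
    have hCpos : 0 < Cb := by positivity
    have hCbd : ∀ j ∈ F, 2*‖q - y j‖*‖d‖ + ‖d‖^2 ≤ Cb - 1 := fun j hj => by
      have := Finset.le_sup' (fun j => 2*‖q - y j‖*‖d‖) hj
      rw [hCb]; linarith
    have hinactive : ∀ j ∈ F, j ∉ I → ‖q - y j‖^2 - ‖g - s j‖^2 < μ := by
      intro j hj hjI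
      refine lt_of_le_of_ne (Finset.le_sup' (fun i => ‖q - y i‖^2 - ‖g - s i‖^2) hj) ?_
      intro h
      exact hjI (mem_filter.2 ⟨hj, h⟩)
    set tf : ι → ℝ := fun j =>
      if j ∈ I then 1 else (μ - (‖q - y j‖^2 - ‖g - s j‖^2))/Cb with htf
    set t : ℝ := min (1/2) (F.inf' hF tf) with ht
    have htpos : 0 < t := by
      apply lt_min (by norm_num)
      rw [Finset.lt_inf'_iff]
      intro j hj
      by_cases hjI : j ∈ I
      · simp [htf, hjI]
      · have hlt := hinactive j hj hjI
        simp only [htf, hjI, if_false]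
        exact div_pos (by linarith) hCpos
    have ht1 : t ≤ 1/2 := min_le_left _ _
    set qt := q + t • d with hqt
    have hqtK : qt ∈ K := by
      have h5 : qt = (1 - t) • q + t • p := by
        rw [hqt, hd]; rw [smul_sub, sub_smul, one_smul]; abel
      rw [h5]
      exact hKconv hqK (hKIsub hpKI) (by linarith) (le_of_lt htpos) (by ring)
    have hlt : ∀ j ∈ F, ‖qt - y j‖^2 - ‖g - s j‖^2 < μ := by
      intro j hj
      have hexp : ‖qt - y j‖^2 = ‖q - y j‖^2 + 2*t*⟪q - y j, d⟫ + t^2*‖d‖^2 := by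
        rw [hqt, show q + t • d - y j = (q - y j) + t • d by abel, @norm_add_sq_real E,
          real_inner_smul_right, norm_smul]
        simp [mul_pow, sq_abs]
        ring
      by_cases hjI : j ∈ I
      · have hv : ‖q - y j‖^2 - ‖g - s j‖^2 = μ := (mem_filter.1 hjI).2
        have hk := hkey j hjI
        have h8 : t*t ≤ t*(1/2) := mul_le_mul_of_nonneg_left ht1 htpos.le
        have h9 : 2*t*⟪q - y j, d⟫ ≤ 2*t*(-‖d‖^2) :=
          mul_le_mul_of_nonneg_left hk (by linarith)
        linarith [mul_pos htpos hd2, mul_le_mul_of_nonneg_right h8 hd2.le, hexp, hv]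
      · have hvlt := hinactive j hj hjI
        have hts : t ≤ (μ - (‖q - y j‖^2 - ‖g - s j‖^2))/Cb := by
          refine le_trans (min_le_right _ _) (le_trans (Finset.inf'_le tf hj) ?_)
          simp [htf, hjI]
        have hib : ⟪q - y j, d⟫ ≤ ‖q - y j‖*‖d‖ := real_inner_le_norm _ _
        have hcb := hCbd j hj
        have htc : t * Cb ≤ μ - (‖q - y j‖^2 - ‖g - s j‖^2) := by
          rw [← le_div_iff₀ hCpos]; exact hts
        have h8 : 2*t*⟪q - y j, d⟫ ≤ 2*t*(‖q - y j‖*‖d‖) :=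
          mul_le_mul_of_nonneg_left hib (by linarith)
        have h9 : t*t ≤ t*1 := mul_le_mul_of_nonneg_left (by linarith) htpos.le
        have h11 : t^2*‖d‖^2 ≤ t*‖d‖^2 := by
          have h12 := mul_le_mul_of_nonneg_right h9 hd2.le
          calc t^2*‖d‖^2 = t*t*‖d‖^2 := by ring
            _ ≤ t*1*‖d‖^2 := h12
            _ = t*‖d‖^2 := by ring
        have h10 : t * (2*‖q - y j‖*‖d‖ + ‖d‖^2) ≤ t * (Cb - 1) :=
          mul_le_mul_of_nonneg_left hcb htpos.le
        linarith [htpos, hexp, h8, h10, h11, htc]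
    have h6 : μ ≤ φ qt := hqmin hqtK
    have h7 : φ qt < μ := by rw [hφ]; exact (Finset.sup'_lt_iff hF).2 hlt
    linarith


set_option maxHeartbeats 1000000 in
lemma my_kirszbraun [CompleteSpace E] {ι : Type*} (s y : ι → E)
    (hlip : ∀ i j, ‖y i - y j‖ ≤ ‖s i - s j‖) (g : E) :
    ∃ q : E, ∀ i, ‖q - y i‖ ≤ ‖g - s i‖ := by
  classical
  rcases isEmpty_or_nonempty ι with hι | hι
  · exact ⟨g, fun i => (IsEmpty.false i).elim⟩
  set i₀ : ι := Classical.arbitrary ι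
  set a : E := y i₀ with ha
  set K : Finset ι → Set E := fun F => ⋂ i ∈ F, Metric.closedBall (y i) ‖g - s i‖ with hKdef
  have hKmem : ∀ (F : Finset ι) (x : E), x ∈ K F ↔ ∀ i ∈ F, ‖x - y i‖ ≤ ‖g - s i‖ := by
    intro F x
    simp [hKdef, Set.mem_iInter, Metric.mem_closedBall, dist_eq_norm]
  have hKne : ∀ F : Finset ι, (K F).Nonempty := by
    intro F
    obtain ⟨q, hq⟩ := my_finite_kirszbraun F s y (fun i _ j _ => hlip i j) g
    exact ⟨q, (hKmem F q).2 hq⟩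
  have hKconv : ∀ F : Finset ι, Convex ℝ (K F) :=
    fun F => convex_iInter fun i => convex_iInter fun _ => convex_closedBall _ _
  have hKmono : ∀ {F F' : Finset ι}, F ⊆ F' → K F' ⊆ K F := by
    intro F F' hsub x hx
    rw [hKmem] at hx ⊢
    exact fun i hi => hx i (hsub hi)
  set δF : Finset ι → ℝ := fun F => Metric.infDist a (K F) with hδF
  have hδF0 : ∀ F, 0 ≤ δF F := fun F => Metric.infDist_nonneg
  have hδFmono : ∀ {F F' : Finset ι}, F ⊆ F' → δF F ≤ δF F' :=
    fun {F F'} hsub => Metric.infDist_le_infDist_of_subset (hKmono hsub) (hKne F')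
  have hδFbdd : ∀ F, δF F ≤ ‖g - s i₀‖ := by
    intro F
    refine le_trans (hδFmono (Finset.subset_insert i₀ F)) ?_
    obtain ⟨x, hx⟩ := hKne (insert i₀ F)
    refine le_trans (Metric.infDist_le_dist_of_mem hx) ?_
    rw [dist_eq_norm, ha, norm_sub_rev]
    exact (hKmem _ x).1 hx i₀ (Finset.mem_insert_self _ _)
  set δ : ℝ := sSup (Set.range δF) with hδ
  have hrne : (Set.range δF).Nonempty := ⟨δF ∅, ⟨∅, rfl⟩⟩
  have hrbdd : BddAbove (Set.range δF) := ⟨‖g - s i₀‖, by rintro _ ⟨F, rfl⟩; exact hδFbdd F⟩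
  have hδle : ∀ F, δF F ≤ δ := fun F => le_csSup hrbdd ⟨F, rfl⟩
  have hδ0 : 0 ≤ δ := le_trans (hδF0 ∅) (hδle ∅)
  have hFseq : ∀ n : ℕ, ∃ F, δ - 1/(n+1) < δF F := by
    intro n
    have hlt : δ - 1/(n+1) < δ := by
      have : 0 < 1/((n:ℝ)+1) := by positivity
      linarith
    obtain ⟨_, ⟨F, rfl⟩, hF⟩ := exists_lt_of_lt_csSup hrne hlt
    exact ⟨F, hF⟩
  choose Fseq hFseq' using hFseq
  set Gs : ℕ → Finset ι := fun n => insert i₀ ((Finset.range (n+1)).biUnion Fseq) with hGs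
  have hGmono : ∀ {m n : ℕ}, m ≤ n → Gs m ⊆ Gs n := by
    intro m n hmn
    apply Finset.insert_subset_insert
    apply Finset.biUnion_subset_biUnion_of_subset_left
    exact Finset.range_subset_range.2 (by omega)
  have hGlb : ∀ n, δ - 1/(n+1) < δF (Gs n) := by
    intro n
    refine lt_of_lt_of_le (hFseq' n) (hδFmono ?_)
    refine Finset.Subset.trans ?_ (Finset.subset_insert _ _)
    exact Finset.subset_biUnion_of_mem Fseq (Finset.self_mem_range_succ n)
  -- choose approximate projections
  have hp : ∀ n : ℕ, ∃ x ∈ K (Gs n), dist a x < δF (Gs n) + 1/(n+1) := by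
    intro n
    rw [← Metric.infDist_lt_iff (hKne _)]
    have : 0 < 1/((n:ℝ)+1) := by positivity
    linarith
  choose p hpK hpd using hp
  -- the key quantitative estimate
  have key : ∀ (F : Finset ι) (u v : E) (ε : ℝ), 0 < ε → ε ≤ 1 → δ - ε < δF F →
      u ∈ K F → v ∈ K F → dist a u ≤ δ + ε → dist a v ≤ δ + ε →
      ‖u - v‖^2 ≤ 8*(2*δ+1)*ε := by
    intro F u v ε hε hε1 hδFε hu hv hdu hdv
    set m : E := (1/2 : ℝ) • u + (1/2 : ℝ) • v with hm
    have hmK : m ∈ K F := hKconv F hu hv (by norm_num) (by norm_num) (by norm_num)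
    have hmd : δF F ≤ dist a m := Metric.infDist_le_dist_of_mem hmK
    have hpar : ‖(u - a) + (v - a)‖^2 + ‖(u - a) - (v - a)‖^2
        = 2*(‖u - a‖^2 + ‖v - a‖^2) := by
      have := parallelogram_law_with_norm ℝ (u - a) (v - a)
      linarith
    have h1 : (u - a) + (v - a) = (2:ℝ) • (m - a) := by
      rw [hm]; module
    have e1 : ‖u - v‖^2 = 2*(‖u - a‖^2 + ‖v - a‖^2) - 4*‖m - a‖^2 := by
      have h2 : ‖u - a - (v - a)‖ = ‖u - v‖ := by
        rw [show u - a - (v - a) = u - v by abel]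
      have h3 : ‖u - a + (v - a)‖^2 = 4*‖m - a‖^2 := by
        rw [h1, norm_smul]
        have h4 : ‖(2:ℝ)‖ = 2 := by norm_num
        rw [h4]; ring
      rw [← h2]; linarith [hpar, h3]
    have hA : ‖u - a‖ ≤ δ + ε := by rw [norm_sub_rev, ← dist_eq_norm]; exact hdu
    have hB : ‖v - a‖ ≤ δ + ε := by rw [norm_sub_rev, ← dist_eq_norm]; exact hdv
    have hC : δF F ≤ ‖m - a‖ := by rw [norm_sub_rev, ← dist_eq_norm]; exact hmd
    have hprod : (δ - δF F)*(δ + δF F) ≤ ε*(2*δ) :=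
      mul_le_mul (by linarith) (by linarith [hδle F]) (by linarith [hδF0 F]) (by linarith)
    nlinarith [norm_nonneg (u - a), norm_nonneg (v - a), hδF0 F, hδle F, hε, hε1, hδ0,
      norm_nonneg (m - a), sq_nonneg (‖u - a‖ - ‖v - a‖)]
  have hε1' : ∀ N : ℕ, (0:ℝ) < 1/(N+1) := fun N => by positivity
  have hεle1 : ∀ N : ℕ, (1:ℝ)/(N+1) ≤ 1 := by
    intro N
    rw [div_le_one (by positivity)]
    have : (0:ℝ) ≤ (N:ℝ) := Nat.cast_nonneg N
    linarith
  have hmono1 : ∀ {N n : ℕ}, N ≤ n → (1:ℝ)/(n+1) ≤ 1/(N+1) := by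
    intro N n h
    apply one_div_le_one_div_of_le (by positivity)
    have : (N:ℝ) ≤ (n:ℝ) := Nat.cast_le.2 h
    linarith
  have hsqrt0 : Filter.Tendsto (fun N : ℕ => Real.sqrt (8*(2*δ+1)*(1/(N+1)))) Filter.atTop (nhds 0) := by
    have h0 : Filter.Tendsto (fun N : ℕ => 8*(2*δ+1)*(1/((N:ℝ)+1))) Filter.atTop (nhds 0) := by
      have h := tendsto_one_div_add_atTop_nhds_zero_nat (𝕜 := ℝ)
      simpa using h.const_mul (8*(2*δ+1))
    have h2 := (Real.continuous_sqrt.tendsto 0).comp h0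
    simpa [Real.sqrt_zero, Function.comp_def] using h2
  have hdistb : ∀ n m N : ℕ, N ≤ n → N ≤ m → dist (p n) (p m)
      ≤ Real.sqrt (8*(2*δ+1)*(1/(N+1))) := by
    intro n m N hn hm
    have h1 : p n ∈ K (Gs N) := hKmono (hGmono hn) (hpK n)
    have h2 : p m ∈ K (Gs N) := hKmono (hGmono hm) (hpK m)
    have h3 : dist a (p n) ≤ δ + 1/(N+1) := by
      linarith [hpd n, hδle (Gs n), hmono1 hn]
    have h4 : dist a (p m) ≤ δ + 1/(N+1) := by
      linarith [hpd m, hδle (Gs m), hmono1 hm]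
    have h5 := key (Gs N) (p n) (p m) (1/(N+1)) (hε1' N) (hεle1 N) (hGlb N) h1 h2 h3 h4
    rw [dist_eq_norm, ← Real.sqrt_sq (norm_nonneg (p n - p m))]
    exact Real.sqrt_le_sqrt h5
  have hcauchy : CauchySeq p := cauchySeq_of_le_tendsto_0 _ hdistb hsqrt0
  obtain ⟨q, hq⟩ := cauchySeq_tendsto_of_complete hcauchy
  refine ⟨q, fun i => ?_⟩
  have hrex : ∀ n : ℕ, ∃ x ∈ K (insert i (Gs n)), dist a x < δF (insert i (Gs n)) + 1/(n+1) := by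
    intro n
    rw [← Metric.infDist_lt_iff (hKne _)]
    linarith [hε1' n]
  choose r hrK hrd using hrex
  have hrb : ∀ n, dist (p n) (r n) ≤ Real.sqrt (8*(2*δ+1)*(1/(n+1))) := by
    intro n
    have h1 : r n ∈ K (Gs n) := hKmono (Finset.subset_insert _ _) (hrK n)
    have h2 : dist a (r n) ≤ δ + 1/(n+1) := by linarith [hrd n, hδle (insert i (Gs n))]
    have h3 : dist a (p n) ≤ δ + 1/(n+1) := by linarith [hpd n, hδle (Gs n)]
    have h5 := key (Gs n) (p n) (r n) (1/(n+1)) (hε1' n) (hεle1 n) (hGlb n) (hpK n) h1 h3 h2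
    rw [dist_eq_norm, ← Real.sqrt_sq (norm_nonneg (p n - r n))]
    exact Real.sqrt_le_sqrt h5
  have hrlim : Filter.Tendsto r Filter.atTop (nhds q) := by
    rw [tendsto_iff_dist_tendsto_zero]
    apply squeeze_zero (fun n => dist_nonneg)
      (fun n => dist_triangle (r n) (p n) q)
    have h1 : Filter.Tendsto (fun n => dist (r n) (p n)) Filter.atTop (nhds 0) := by
      apply squeeze_zero (fun n => dist_nonneg) (fun n => (dist_comm (r n) (p n)) ▸ hrb n) hsqrt0
    have h2 : Filter.Tendsto (fun n => dist (p n) q) Filter.atTop (nhds 0) :=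
      tendsto_iff_dist_tendsto_zero.1 hq
    simpa using h1.add h2
  have hqmem : q ∈ Metric.closedBall (y i) ‖g - s i‖ := by
    refine Metric.isClosed_closedBall.mem_of_tendsto hrlim (Filter.Eventually.of_forall fun n => ?_)
    have := (hKmem _ (r n)).1 (hrK n) i (Finset.mem_insert_self _ _)
    rwa [Metric.mem_closedBall, dist_eq_norm]
  rwa [Metric.mem_closedBall, dist_eq_norm] at hqmem


end Aux

lemma my_minty {G : Type*} [NormedAddCommGroup G] [InnerProductSpace ℝ G] [CompleteSpace G]
    (B : G → Set G) (hB : SVMaxMonotone B) (g : G) :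
    ∃ w, g - w ∈ B w := by
  classical
  set ι := {p : G × G // p.2 ∈ B p.1} with hι
  set sf : ι → G := fun p => p.1.1 + p.1.2 with hsf
  set yf : ι → G := fun p => p.1.1 - p.1.2 with hyf
  have hlip : ∀ i j : ι, ‖yf i - yf j‖ ≤ ‖sf i - sf j‖ := by
    intro i j
    have hmon := hB.1 i.1.1 i.1.2 j.1.1 j.1.2 i.2 j.2
    have h1 : ‖yf i - yf j‖^2 ≤ ‖sf i - sf j‖^2 := by
      have e1 : yf i - yf j = (i.1.1 - j.1.1) - (i.1.2 - j.1.2) := by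
        simp only [hyf]; abel
      have e2 : sf i - sf j = (i.1.1 - j.1.1) + (i.1.2 - j.1.2) := by
        simp only [hsf]; abel
      rw [e1, e2, @norm_sub_sq_real G, @norm_add_sq_real G]
      linarith [hmon]
    calc ‖yf i - yf j‖ = Real.sqrt (‖yf i - yf j‖^2) := (Real.sqrt_sq (norm_nonneg _)).symm
      _ ≤ Real.sqrt (‖sf i - sf j‖^2) := Real.sqrt_le_sqrt h1
      _ = ‖sf i - sf j‖ := Real.sqrt_sq (norm_nonneg _)
  obtain ⟨q, hq⟩ := my_kirszbraun sf yf hlip g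
  set w := (2:ℝ)⁻¹ • (g + q) with hw
  refine ⟨w, hB.2 w (g - w) ?_⟩
  intro y₀ v₀ hv₀
  set i : ι := ⟨(y₀, v₀), hv₀⟩ with hidef
  have h2 := hq i
  have e1 : w - y₀ = (2:ℝ)⁻¹ • ((g - sf i) + (q - yf i)) := by
    simp only [hsf, hyf, hw, hidef]; module
  have e2 : (g - w) - v₀ = (2:ℝ)⁻¹ • ((g - sf i) - (q - yf i)) := by
    simp only [hsf, hyf, hw, hidef]; module
  rw [e1, e2, real_inner_smul_left, real_inner_smul_right]
  have e3 : ⟪(g - sf i) + (q - yf i), (g - sf i) - (q - yf i)⟫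
      = ‖g - sf i‖^2 - ‖q - yf i‖^2 := by
    rw [inner_sub_right, inner_add_left, inner_add_left, real_inner_self_eq_norm_sq,
      real_inner_self_eq_norm_sq, real_inner_comm]
    ring
  rw [e3]
  nlinarith [h2, norm_nonneg (g - sf i), norm_nonneg (q - yf i)]

/-- If `‖L‖ ≤ 1` and `B` is maximally monotone, then `L ▷ B` is maximally
monotone. -/
theorem rcomp_maxMonotone (L : H →L[ℝ] G) (hL : ‖L‖ ≤ 1) (B : G → Set G)
    (hB : SVMaxMonotone B) : SVMaxMonotone (rcomp L B) := by
  have hmem : ∀ x u : H, u ∈ rcomp L B x ↔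
      ∃ w, L (u + x) - w ∈ B w ∧ (ContinuousLinearMap.adjoint L) w = x := by
    intro x u
    simp only [rcomp, minusId, parComp, svInv, svComp, plusId, Set.mem_image,
      Set.mem_setOf_eq]
    constructor
    · rintro ⟨z, ⟨w, ⟨v, hv, hvw⟩, hwx⟩, hzx⟩
      refine ⟨w, ?_, hwx⟩
      have hz : z = u + x := by rw [← hzx]; abel
      rw [← hz, ← hvw]
      simpa using hv
    · rintro ⟨w, hw, hwx⟩
      exact ⟨u + x, ⟨w, ⟨L (u + x) - w, hw, by abel⟩, hwx⟩, by abel⟩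
  have hadjnorm : ‖ContinuousLinearMap.adjoint L‖ ≤ 1 := by
    rw [LinearIsometryEquiv.norm_map ContinuousLinearMap.adjoint L]
    exact hL
  constructor
  · intro x₁ u₁ x₂ u₂ h1 h2
    obtain ⟨w₁, hb₁, hw₁⟩ := (hmem x₁ u₁).1 h1
    obtain ⟨w₂, hb₂, hw₂⟩ := (hmem x₂ u₂).1 h2
    have hmon := hB.1 w₁ _ w₂ _ hb₁ hb₂
    have e1 : (L (u₁+x₁) - w₁) - (L (u₂+x₂) - w₂)
        = L ((u₁+x₁) - (u₂+x₂)) - (w₁ - w₂) := by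
      rw [map_sub]; abel
    rw [e1, inner_sub_right] at hmon
    have e2 : ⟪w₁ - w₂, L ((u₁+x₁) - (u₂+x₂))⟫ = ⟪x₁ - x₂, (u₁+x₁) - (u₂+x₂)⟫ := by
      rw [← ContinuousLinearMap.adjoint_inner_left, map_sub, hw₁, hw₂]
    have e3 : ⟪x₁ - x₂, (u₁+x₁) - (u₂+x₂)⟫ = ⟪x₁ - x₂, u₁ - u₂⟫ + ‖x₁ - x₂‖^2 := by
      rw [show (u₁+x₁) - (u₂+x₂) = (u₁ - u₂) + (x₁ - x₂) by abel, inner_add_right,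
        real_inner_self_eq_norm_sq]
    have e4 : ‖x₁ - x₂‖ ≤ ‖w₁ - w₂‖ := by
      calc ‖x₁ - x₂‖ = ‖(ContinuousLinearMap.adjoint L) (w₁ - w₂)‖ := by
            rw [map_sub, hw₁, hw₂]
        _ ≤ ‖ContinuousLinearMap.adjoint L‖ * ‖w₁ - w₂‖ :=
            ContinuousLinearMap.le_opNorm _ _
        _ ≤ 1 * ‖w₁ - w₂‖ := mul_le_mul_of_nonneg_right hadjnorm (norm_nonneg _)
        _ = ‖w₁ - w₂‖ := one_mul _
    rw [e2, e3, real_inner_self_eq_norm_sq] at hmon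
    nlinarith [norm_nonneg (x₁ - x₂), norm_nonneg (w₁ - w₂)]
  · intro x u hrel
    obtain ⟨w, hw⟩ := my_minty B hB (L (x + u))
    set p := (ContinuousLinearMap.adjoint L) w with hp
    have hpmem : (x + u - p) ∈ rcomp L B p := by
      refine (hmem p (x + u - p)).2 ⟨w, ?_, rfl⟩
      rw [show x + u - p + p = x + u by abel]
      exact hw
    have h0 := hrel p (x + u - p) hpmem
    have hxp : x = p := by
      have e : ⟪x - p, u - (x + u - p)⟫ = -‖x - p‖^2 := by
        rw [show u - (x + u - p) = -(x - p) by abel, inner_neg_right,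
          real_inner_self_eq_norm_sq]
      rw [e] at h0
      have h5 : ‖x - p‖ = 0 := by nlinarith [norm_nonneg (x - p)]
      exact sub_eq_zero.1 (norm_eq_zero.1 h5)
    refine (hmem x u).2 ⟨w, ?_, hxp ▸ rfl⟩
    rw [show u + x = x + u by abel]
    exact hw
end
end

section
/- If ‖L‖ ≤ 1, L is injective, and B : G → 2^G is maximally monotone and injective (Bx₁ ∩ Bx₂ ≠ ∅ implies x₁ = x₂), then the resolvent composition L ▷ B is injective. -/
open scoped RealInnerProductSpace

noncomputable section

variable {H G : Type*}
  [NormedAddCommGroup H] [InnerProductSpace ℝ H] [CompleteSpace H]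
  [NormedAddCommGroup G] [InnerProductSpace ℝ G] [CompleteSpace G]

/-- If `‖L‖ ≤ 1`, `L` is injective, and `B` is maximally monotone and injective,
then `L ▷ B` is injective. -/
theorem rcomp_injective (L : H →L[ℝ] G) (hL : ‖L‖ ≤ 1)
    (hinj : Function.Injective L) (B : G → Set G) (hB : SVMaxMonotone B)
    (hBinj : ∀ y₁ y₂, (B y₁ ∩ B y₂).Nonempty → y₁ = y₂) :
    ∀ x₁ x₂, (rcomp L B x₁ ∩ rcomp L B x₂).Nonempty → x₁ = x₂ := by
  rintro x₁ x₂ ⟨u, hu₁, hu₂⟩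
  simp only [rcomp, minusId, parComp, svInv, svComp, plusId, Set.mem_image,
    Set.mem_setOf_eq] at hu₁ hu₂
  obtain ⟨w₁, ⟨v₁, ⟨b₁, hb₁, hbv₁⟩, hLv₁⟩, hw₁⟩ := hu₁
  obtain ⟨w₂, ⟨v₂, ⟨b₂, hb₂, hbv₂⟩, hLv₂⟩, hw₂⟩ := hu₂
  set L' := ContinuousLinearMap.adjoint L with hL'
  set v : G := v₁ - v₂ with hv
  -- w₁ - w₂ = L' v
  have hww : w₁ - w₂ = L' v := by
    have h1 : w₁ - x₁ = w₂ - x₂ := by rw [hw₁, hw₂]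
    have h2 : w₁ - w₂ = x₁ - x₂ := sub_eq_sub_iff_sub_eq_sub.mp h1
    rw [h2, ← hLv₁, ← hLv₂, ← map_sub, hv]
  -- b₁ - b₂ = L (L' v) - v
  have hbb : b₁ - b₂ = L (L' v) - v := by
    have e1 : b₁ = L w₁ - v₁ := eq_sub_of_add_eq hbv₁
    have e2 : b₂ = L w₂ - v₂ := eq_sub_of_add_eq hbv₂
    rw [e1, e2, hv, ← hww, map_sub]
    abel
  -- monotonicity
  have hmono : (0:ℝ) ≤ ⟪v, b₁ - b₂⟫ := hB.1 v₁ b₁ v₂ b₂ hb₁ hb₂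
  rw [hbb, inner_sub_right] at hmono
  have hadj : ⟪v, L (L' v)⟫ = ‖L' v‖ ^ 2 := by
    rw [← ContinuousLinearMap.adjoint_inner_left L (L' v) v, ← hL',
      real_inner_self_eq_norm_sq]
  have hvv : ⟪v, v⟫ = ‖v‖ ^ 2 := real_inner_self_eq_norm_sq v
  have hge : ‖v‖ ^ 2 ≤ ‖L' v‖ ^ 2 := by rw [hadj, hvv] at hmono; linarith
  -- ‖L (L' v)‖ ≤ ‖L' v‖
  have hle : ‖L (L' v)‖ ≤ ‖L' v‖ := by
    calc ‖L (L' v)‖ ≤ ‖L‖ * ‖L' v‖ := L.le_opNorm _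
      _ ≤ 1 * ‖L' v‖ := by
          exact mul_le_mul_of_nonneg_right hL (norm_nonneg _)
      _ = ‖L' v‖ := one_mul _
  -- L (L' v) = v
  have hfix : L (L' v) = v := by
    have hsq : ‖L (L' v) - v‖ ^ 2 =
        ‖L (L' v)‖ ^ 2 - 2 * ⟪L (L' v), v⟫ + ‖v‖ ^ 2 := norm_sub_sq_real _ _
    have h3 : ⟪L (L' v), v⟫ = ‖L' v‖ ^ 2 := by rw [real_inner_comm]; exact hadj
    have h4 : ‖L (L' v)‖ ^ 2 ≤ ‖L' v‖ ^ 2 := by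
      have := sq_le_sq' (by linarith [norm_nonneg (L (L' v))]) hle
      simpa using this
    have h5 : ‖L (L' v) - v‖ ^ 2 ≤ 0 := by rw [hsq, h3]; linarith
    have h6 : ‖L (L' v) - v‖ = 0 := by nlinarith [norm_nonneg (L (L' v) - v)]
    exact sub_eq_zero.mp (norm_eq_zero.mp h6)
  have hb12 : b₁ = b₂ := by
    have : b₁ - b₂ = 0 := by rw [hbb, hfix, sub_self]
    exact sub_eq_zero.mp this
  have hv12 : v₁ = v₂ := hBinj v₁ v₂ ⟨b₁, hb₁, hb12 ▸ hb₂⟩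
  rw [← hLv₁, ← hLv₂, hv12]
end
end

section
/- If 0 < ‖L‖ < √(β+1), D ⊆ G nonempty, and B : D → G is β-cocoercive, then the resolvent cocomposition L ▶ B is α-cocoercive with α = (β+1)‖L‖⁻² − 1. -/
open scoped RealInnerProductSpace

noncomputable section

variable {H G : Type*}
  [NormedAddCommGroup H] [InnerProductSpace ℝ H] [CompleteSpace H]
  [NormedAddCommGroup G] [InnerProductSpace ℝ G] [CompleteSpace G]

/-- If `B : D → G` is `β`-cocoercive and `0 < ‖L‖ < √(β+1)`, then `L ▶ B` is
`α`-cocoercive with `α = (β+1)‖L‖⁻² − 1`. -/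
theorem ccomp_cocoercive (L : H →L[ℝ] G) (β : ℝ) (hβ : 0 < β)
    (hL0 : 0 < ‖L‖) (hLb : ‖L‖ < Real.sqrt (β + 1))
    (D : Set G) (hD : D.Nonempty) (B : G → G)
    (hB : ∀ y₁ ∈ D, ∀ y₂ ∈ D, β * ‖B y₁ - B y₂‖ ^ 2 ≤ ⟪y₁ - y₂, B y₁ - B y₂⟫) :
    ∀ x₁ u₁ x₂ u₂,
      u₁ ∈ ccomp L (fun y => {v | y ∈ D ∧ v = B y}) x₁ →
      u₂ ∈ ccomp L (fun y => {v | y ∈ D ∧ v = B y}) x₂ →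
      ((β + 1) / ‖L‖ ^ 2 - 1) * ‖u₁ - u₂‖ ^ 2 ≤ ⟪x₁ - x₂, u₁ - u₂⟫ := by
  intro x₁ u₁ x₂ u₂ h₁ h₂
  simp only [ccomp, rcomp, minusId, parComp, svComp, svInv, plusId, Set.mem_image,
    Set.mem_setOf_eq] at h₁ h₂
  obtain ⟨w₁, ⟨g₁, ⟨a₁, ⟨ha₁D, hg₁⟩, hsum₁⟩, hu₁⟩, hwx₁⟩ := h₁
  obtain ⟨w₂, ⟨g₂, ⟨a₂, ⟨ha₂D, hg₂⟩, hsum₂⟩, hu₂⟩, hwx₂⟩ := h₂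
  set L' := ContinuousLinearMap.adjoint L with hL'
  -- u = L' g, w = x + u, a + g = L w
  have hx₁ : w₁ = x₁ + u₁ := by rw [← hwx₁]; abel
  have hx₂ : w₂ = x₂ + u₂ := by rw [← hwx₂]; abel
  have hu : u₁ - u₂ = L' (g₁ - g₂) := by rw [map_sub, hu₁, hu₂]
  -- inner product identity
  have hLx : L x₁ - L x₂ = (a₁ - a₂) + (g₁ - g₂) - L (u₁ - u₂) := by
    rw [hx₁, map_add] at hsum₁
    rw [hx₂, map_add] at hsum₂
    have e₁ : L x₁ = a₁ + g₁ - L u₁ := by rw [hsum₁]; abel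
    have e₂ : L x₂ = a₂ + g₂ - L u₂ := by rw [hsum₂]; abel
    rw [e₁, e₂, map_sub]; abel
  have key : ⟪x₁ - x₂, u₁ - u₂⟫ = ⟪a₁ - a₂, g₁ - g₂⟫ + ‖g₁ - g₂‖ ^ 2 - ‖u₁ - u₂‖ ^ 2 := by
    have h1 : ⟪x₁ - x₂, u₁ - u₂⟫ = ⟪L x₁ - L x₂, g₁ - g₂⟫ := by
      rw [hu, ContinuousLinearMap.adjoint_inner_right, map_sub]
    have h2 : ⟪L (u₁ - u₂), g₁ - g₂⟫ = ‖u₁ - u₂‖ ^ 2 := by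
      rw [← ContinuousLinearMap.adjoint_inner_right, ← hu, real_inner_self_eq_norm_sq]
    rw [h1, hLx, inner_sub_left, inner_add_left, h2, real_inner_self_eq_norm_sq]
  -- cocoercivity
  have hcoco : β * ‖g₁ - g₂‖ ^ 2 ≤ ⟪a₁ - a₂, g₁ - g₂⟫ := by
    have := hB a₁ ha₁D a₂ ha₂D
    rwa [← hg₁, ← hg₂] at this
  -- norm bound
  have hnorm : ‖u₁ - u₂‖ ≤ ‖L‖ * ‖g₁ - g₂‖ := by
    rw [hu]
    calc ‖L' (g₁ - g₂)‖ ≤ ‖L'‖ * ‖g₁ - g₂‖ := L'.le_opNorm _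
      _ = ‖L‖ * ‖g₁ - g₂‖ := by rw [hL', LinearIsometryEquiv.norm_map ContinuousLinearMap.adjoint L]
  have hnorm2 : ‖u₁ - u₂‖ ^ 2 ≤ ‖L‖ ^ 2 * ‖g₁ - g₂‖ ^ 2 := by
    rw [← mul_pow]
    exact pow_le_pow_left₀ (norm_nonneg _) hnorm 2
  have hβ1 : (0:ℝ) < β + 1 := by linarith
  have hL2 : (0:ℝ) < ‖L‖ ^ 2 := by positivity
  have hg2 : ‖u₁ - u₂‖ ^ 2 / ‖L‖ ^ 2 ≤ ‖g₁ - g₂‖ ^ 2 := by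
    rw [div_le_iff₀ hL2]; linarith [hnorm2]
  have : ((β + 1) / ‖L‖ ^ 2) * ‖u₁ - u₂‖ ^ 2 ≤ (β + 1) * ‖g₁ - g₂‖ ^ 2 := by
    rw [div_mul_eq_mul_div, mul_div_assoc]
    exact mul_le_mul_of_nonneg_left hg2 (le_of_lt hβ1)
  rw [key]
  nlinarith [hcoco, this]
end
end

section
/- If ‖L‖ ≤ 1 and B : D → G (D ⊆ G nonempty) is monotone and nonexpansive, then the resolvent cocomposition L ▶ B is monotone and nonexpansive. -/
open scoped RealInnerProductSpace

noncomputable section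

variable {H G : Type*}
  [NormedAddCommGroup H] [InnerProductSpace ℝ H] [CompleteSpace H]
  [NormedAddCommGroup G] [InnerProductSpace ℝ G] [CompleteSpace G]


lemma mem_ccomp_iff (L : H →L[ℝ] G) (D : Set G) (B : G → G) (x u : H) :
    u ∈ ccomp L (fun y => {v | y ∈ D ∧ v = B y}) x ↔
    ∃ q, q ∈ D ∧ u = (ContinuousLinearMap.adjoint L) (B q) ∧ L (x + u) = q + B q := by
  simp only [ccomp, rcomp, parComp, svComp, svInv, plusId, minusId, Set.mem_image,
    Set.mem_setOf_eq]
  constructor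
  · rintro ⟨w, ⟨p, ⟨a, ⟨haD, rfl⟩, hsum⟩, rfl⟩, hx⟩
    refine ⟨a, haD, rfl, ?_⟩
    have : x + ContinuousLinearMap.adjoint L (B a) = w := by
      rw [← hx]; abel
    rw [this]; exact hsum.symm
  · rintro ⟨q, hqD, rfl, hsum⟩
    exact ⟨x + ContinuousLinearMap.adjoint L (B q), ⟨B q, ⟨q, ⟨hqD, rfl⟩, hsum.symm⟩, rfl⟩, by abel⟩

/-- If `‖L‖ ≤ 1` and `B : D → G` is monotone and nonexpansive, then `L ▶ B` is
monotone and nonexpansive. -/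
theorem ccomp_monotone_nonexpansive (L : H →L[ℝ] G) (hL : ‖L‖ ≤ 1)
    (D : Set G) (hD : D.Nonempty) (B : G → G)
    (hmon : ∀ y₁ ∈ D, ∀ y₂ ∈ D, 0 ≤ ⟪y₁ - y₂, B y₁ - B y₂⟫)
    (hne : ∀ y₁ ∈ D, ∀ y₂ ∈ D, ‖B y₁ - B y₂‖ ≤ ‖y₁ - y₂‖) :
    SVMonotone (ccomp L (fun y => {v | y ∈ D ∧ v = B y})) ∧
      ∀ x₁ u₁ x₂ u₂,
        u₁ ∈ ccomp L (fun y => {v | y ∈ D ∧ v = B y}) x₁ →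
        u₂ ∈ ccomp L (fun y => {v | y ∈ D ∧ v = B y}) x₂ →
        ‖u₁ - u₂‖ ≤ ‖x₁ - x₂‖ := by
  have key : ∀ x₁ u₁ x₂ u₂,
      u₁ ∈ ccomp L (fun y => {v | y ∈ D ∧ v = B y}) x₁ →
      u₂ ∈ ccomp L (fun y => {v | y ∈ D ∧ v = B y}) x₂ →
      0 ≤ ⟪x₁ - x₂, u₁ - u₂⟫ ∧ ‖u₁ - u₂‖ ≤ ‖x₁ - x₂‖ := by
    intro x₁ u₁ x₂ u₂ h1 h2
    rw [mem_ccomp_iff] at h1 h2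
    obtain ⟨q₁, hq₁, hu₁, hs₁⟩ := h1
    obtain ⟨q₂, hq₂, hu₂, hs₂⟩ := h2
    set x := x₁ - x₂ with hxdef
    set u := u₁ - u₂ with hudef
    set b := B q₁ - B q₂ with hbdef
    set q := q₁ - q₂ with hqdef
    have hub : u = (ContinuousLinearMap.adjoint L) b := by
      rw [hudef, hbdef, hu₁, hu₂, map_sub]
    have hc : L (x + u) = q + b := by
      have h : x + u = (x₁ + u₁) - (x₂ + u₂) := by rw [hxdef, hudef]; abel
      rw [h, map_sub, hs₁, hs₂, hqdef, hbdef]; abel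
    have hqc : q = L (x + u) - b := by rw [hc]; abel
    have hinner : ⟪L (x + u), b⟫ = ⟪x, u⟫ + ‖u‖ ^ 2 := by
      rw [← ContinuousLinearMap.adjoint_inner_right L, ← hub, inner_add_left,
        real_inner_self_eq_norm_sq]
    have hqb : ⟪q, b⟫ = ⟪x, u⟫ + ‖u‖ ^ 2 - ‖b‖ ^ 2 := by
      rw [hqc, inner_sub_left, real_inner_self_eq_norm_sq, hinner]
    have hmon' : 0 ≤ ⟪q, b⟫ := hmon q₁ hq₁ q₂ hq₂
    have hbq : ‖b‖ ≤ ‖q‖ := hne q₁ hq₁ q₂ hq₂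
    have hadj : ‖(ContinuousLinearMap.adjoint L : G →L[ℝ] H)‖ ≤ 1 := by
      have : ‖(ContinuousLinearMap.adjoint L : G →L[ℝ] H)‖ = ‖L‖ :=
        LinearIsometryEquiv.norm_map ContinuousLinearMap.adjoint L
      rw [this]; exact hL
    have hunorm : ‖u‖ ≤ ‖b‖ := by
      calc ‖u‖ = ‖(ContinuousLinearMap.adjoint L) b‖ := by rw [hub]
        _ ≤ ‖(ContinuousLinearMap.adjoint L : G →L[ℝ] H)‖ * ‖b‖ :=
            (ContinuousLinearMap.adjoint L).le_opNorm b
        _ ≤ 1 * ‖b‖ := by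
            exact mul_le_mul_of_nonneg_right hadj (norm_nonneg b)
        _ = ‖b‖ := one_mul _
    have hmono : 0 ≤ ⟪x, u⟫ := by
      nlinarith [norm_nonneg u, norm_nonneg b]
    refine ⟨hmono, ?_⟩
    have hq2 : ‖q‖ ^ 2 = ‖L (x + u)‖ ^ 2 - 2 * ⟪L (x + u), b⟫ + ‖b‖ ^ 2 := by
      rw [hqc, norm_sub_sq_real]
    have hLxu : ‖L (x + u)‖ ≤ ‖x + u‖ := by
      calc ‖L (x + u)‖ ≤ ‖L‖ * ‖x + u‖ := L.le_opNorm _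
        _ ≤ 1 * ‖x + u‖ := mul_le_mul_of_nonneg_right hL (norm_nonneg _)
        _ = ‖x + u‖ := one_mul _
    have hxu : ‖x + u‖ ^ 2 = ‖x‖ ^ 2 + 2 * ⟪x, u⟫ + ‖u‖ ^ 2 := norm_add_sq_real x u
    nlinarith [norm_nonneg u, norm_nonneg x, norm_nonneg (x + u), norm_nonneg (L (x + u)),
      norm_nonneg q, norm_nonneg b]
  exact ⟨fun x₁ u₁ x₂ u₂ h1 h2 => (key x₁ u₁ x₂ u₂ h1 h2).1,
    fun x₁ u₁ x₂ u₂ h1 h2 => (key x₁ u₁ x₂ u₂ h1 h2).2⟩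
end
end

section
/- For L : H → G an isometry and g : G → ]−∞,+∞] proper admitting a continuous affine minorant, the proximal composition L ▷ g satisfies (g* ∘ L)* ≤ L ▷ g ≤ g ∘ L. -/
open scoped RealInnerProductSpace

noncomputable section

/-- Fenchel conjugate with values in `EReal`. -/
def eConj {E : Type*} [NormedAddCommGroup E] [InnerProductSpace ℝ E] (f : E → EReal) :
    E → EReal :=
  fun u => ⨆ x, ((⟪x, u⟫ : ℝ) : EReal) - f x

/-- Infimal convolution. -/
def eInfConv {E : Type*} [AddGroup E] (f g : E → EReal) : E → EReal :=
  fun x => ⨅ z, f z + g (x - z)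

/-- Canonical quadratic form `Q = ‖·‖²/2`. -/
def eQ {E : Type*} [Norm E] : E → EReal := fun x => ((‖x‖ ^ 2 / 2 : ℝ) : EReal)

/-- Proximal composition `L ▷ g = ((g* □ Q_G) ∘ L)* - Q_H`. -/
def pcomp {H G : Type*} [NormedAddCommGroup H] [InnerProductSpace ℝ H] [CompleteSpace H]
    [NormedAddCommGroup G] [InnerProductSpace ℝ G] [CompleteSpace G]
    (L : H →L[ℝ] G) (g : G → EReal) : H → EReal :=
  fun x => eConj (fun h => eInfConv (eConj g) eQ (L h)) x - eQ x

/-- Proximal cocomposition `L ▶ g = (L ▷ g*)*`. -/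
def pccomp {H G : Type*} [NormedAddCommGroup H] [InnerProductSpace ℝ H] [CompleteSpace H]
    [NormedAddCommGroup G] [InnerProductSpace ℝ G] [CompleteSpace G]
    (L : H →L[ℝ] G) (g : G → EReal) : H → EReal :=
  eConj (pcomp L (eConj g))

/-- Properness of an `EReal`-valued function. -/
def EProper {E : Type*} (f : E → EReal) : Prop := (∀ x, f x ≠ ⊥) ∧ ∃ x, f x ≠ ⊤

/-- Convexity via the epigraph. -/
def EConvex {E : Type*} [AddCommGroup E] [Module ℝ E] (f : E → EReal) : Prop :=
  Convex ℝ {p : E × ℝ | f p.1 ≤ (p.2 : EReal)}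

/-- Convex subdifferential. -/
def esubdiff {E : Type*} [NormedAddCommGroup E] [InnerProductSpace ℝ E] (f : E → EReal) :
    E → Set E :=
  fun x => {u | ∀ z, f x + ((⟪z - x, u⟫ : ℝ) : EReal) ≤ f z}

/-- `p` is the proximal point of `f` at `x`. -/
def IsProxPt {E : Type*} [NormedAddCommGroup E] [InnerProductSpace ℝ E]
    (f : E → EReal) (x p : E) : Prop :=
  ∀ z, f p + ((‖x - p‖ ^ 2 / 2 : ℝ) : EReal) ≤ f z + ((‖x - z‖ ^ 2 / 2 : ℝ) : EReal)

variable {H G : Type*}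
  [NormedAddCommGroup H] [InnerProductSpace ℝ H] [CompleteSpace H]
  [NormedAddCommGroup G] [InnerProductSpace ℝ G] [CompleteSpace G]

/-- For an isometry `L` and proper `g` with a continuous affine minorant,
`(g* ∘ L)* ≤ L ▷ g ≤ g ∘ L`. -/
theorem pcomp_bounds (L : H →L[ℝ] G) (hiso : ∀ x, ‖L x‖ = ‖x‖)
    (g : G → EReal) (hp : EProper g)
    (hmin : ∃ (u : G) (c : ℝ), ∀ y, ((⟪y, u⟫ + c : ℝ) : EReal) ≤ g y) :
    ∀ x, eConj (fun h => eConj g (L h)) x ≤ pcomp L g x ∧ pcomp L g x ≤ g (L x) := by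
  have hLi : ∀ a b : H, ⟪L a, L b⟫ = ⟪a, b⟫ := by
    intro a b
    exact (LinearIsometry.inner_map_map ⟨L.toLinearMap, hiso⟩ a b)
  set φ : H → EReal := fun h => eInfConv (eConj g) eQ (L h) with hφ
  have hFY : ∀ (y z : G), ((⟪y, z⟫ : ℝ) : EReal) - g y ≤ eConj g z := by
    intro y z
    exact le_iSup (fun w => ((⟪w, z⟫ : ℝ) : EReal) - g w) y
  intro x
  constructor
  · -- lower bound
    rw [pcomp]
    refine iSup_le fun h' => ?_
    rcases eq_top_or_lt_top (eConj g (L h')) with htop | hlt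
    · simp [htop, EReal.sub_top]
    have hbot : eConj g (L h') ≠ ⊥ := by
      obtain ⟨hnb, y₀, hnt⟩ := hp
      lift g y₀ to ℝ using ⟨hnt, hnb y₀⟩ with t ht
      intro hb
      have := hFY y₀ (L h')
      rw [hb, ← ht, ← EReal.coe_sub] at this
      exact (EReal.coe_ne_bot _) (le_bot_iff.mp this)
    lift eConj g (L h') to ℝ using ⟨hlt.ne, hbot⟩ with r hr
    have h1 : φ (h' + x) ≤ ((r + ‖x‖ ^ 2 / 2 : ℝ) : EReal) := by
      show (⨅ z, eConj g z + eQ (L (h' + x) - z)) ≤ _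
      refine le_trans (iInf_le _ (L h')) ?_
      rw [← hr]
      have hL : L (h' + x) - L h' = L x := by rw [map_add]; abel
      rw [hL, eQ, hiso, ← EReal.coe_add]
    have h2 : ((⟪h' + x, x⟫ - (r + ‖x‖ ^ 2 / 2) : ℝ) : EReal) ≤ eConj φ x := by
      refine le_trans ?_ (le_iSup (fun h => ((⟪h, x⟫ : ℝ) : EReal) - φ h) (h' + x))
      rw [EReal.coe_sub]
      exact EReal.sub_le_sub le_rfl h1
    have h3 : (⟪h' + x, x⟫ - (r + ‖x‖ ^ 2 / 2) : ℝ) = ⟪h', x⟫ - r + ‖x‖ ^ 2 / 2 := by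
      rw [inner_add_left, real_inner_self_eq_norm_sq]
      ring
    rw [h3] at h2
    calc ((⟪h', x⟫ : ℝ) : EReal) - ((r : ℝ) : EReal)
        = ((⟪h', x⟫ - r + ‖x‖ ^ 2 / 2 : ℝ) : EReal) - ((‖x‖ ^ 2 / 2 : ℝ) : EReal) := by
          rw [← EReal.coe_sub, ← EReal.coe_sub]; norm_cast; ring
      _ ≤ eConj φ x - eQ x := EReal.sub_le_sub h2 le_rfl
  · -- upper bound
    rw [pcomp]
    rcases eq_top_or_lt_top (g (L x)) with htop | hlt
    · simp [htop]
    lift g (L x) to ℝ using ⟨hlt.ne, hp.1 (L x)⟩ with t ht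
    have key : eConj φ x ≤ ((t + ‖x‖ ^ 2 / 2 : ℝ) : EReal) := by
      refine iSup_le fun h => ?_
      have hlow : ((⟪h, x⟫ - t - ‖x‖ ^ 2 / 2 : ℝ) : EReal) ≤ φ h := by
        show _ ≤ ⨅ z, eConj g z + eQ (L h - z)
        refine le_iInf fun z => ?_
        have hgz : ((⟪L x, z⟫ - t : ℝ) : EReal) ≤ eConj g z := by
          refine le_trans ?_ (hFY (L x) z)
          rw [← ht, ← EReal.coe_sub]
        calc ((⟪h, x⟫ - t - ‖x‖ ^ 2 / 2 : ℝ) : EReal)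
            ≤ ((⟪L x, z⟫ - t + ‖L h - z‖ ^ 2 / 2 : ℝ) : EReal) := by
              norm_cast
              have hi : ⟪h, x⟫ - ⟪L x, z⟫ = ⟪L h - z, L x⟫ := by
                rw [inner_sub_left, hLi, real_inner_comm x h, real_inner_comm z (L x)]
              have hb : ⟪L h - z, L x⟫ ≤ ‖L h - z‖ ^ 2 / 2 + ‖x‖ ^ 2 / 2 := by
                calc ⟪L h - z, L x⟫ ≤ ‖L h - z‖ * ‖L x‖ := real_inner_le_norm _ _
                  _ ≤ ‖L h - z‖ ^ 2 / 2 + ‖L x‖ ^ 2 / 2 := by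
                      nlinarith [sq_nonneg (‖L h - z‖ - ‖L x‖)]
                  _ = ‖L h - z‖ ^ 2 / 2 + ‖x‖ ^ 2 / 2 := by rw [hiso]
              linarith [hi ▸ hb]
          _ ≤ eConj g z + eQ (L h - z) := by
              show _ ≤ eConj g z + ((‖L h - z‖ ^ 2 / 2 : ℝ) : EReal)
              calc ((⟪L x, z⟫ - t + ‖L h - z‖ ^ 2 / 2 : ℝ) : EReal)
                  = ((⟪L x, z⟫ - t : ℝ) : EReal) + ((‖L h - z‖ ^ 2 / 2 : ℝ) : EReal) := by
                    rw [← EReal.coe_add]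
                _ ≤ eConj g z + ((‖L h - z‖ ^ 2 / 2 : ℝ) : EReal) := add_le_add hgz le_rfl
      calc ((⟪h, x⟫ : ℝ) : EReal) - φ h
          ≤ ((⟪h, x⟫ : ℝ) : EReal) - ((⟪h, x⟫ - t - ‖x‖ ^ 2 / 2 : ℝ) : EReal) :=
            EReal.sub_le_sub le_rfl hlow
        _ = ((t + ‖x‖ ^ 2 / 2 : ℝ) : EReal) := by rw [← EReal.coe_sub]; norm_cast; ring
    calc eConj φ x - eQ x ≤ ((t + ‖x‖ ^ 2 / 2 : ℝ) : EReal) - ((‖x‖ ^ 2 / 2 : ℝ) : EReal) :=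
          EReal.sub_le_sub key le_rfl
      _ = ((t : ℝ) : EReal) := by rw [← EReal.coe_sub]; norm_cast; ring
end
end

section
/- If 0 < ‖L‖ ≤ 1 and g ∈ Γ₀(G), then the Moreau envelope of the proximal cocomposition satisfies (L ▶ g) □ Q_H = (g □ Q_G) ∘ L, and consequently L⁻¹(Argmin g) ⊆ Argmin(L ▶ g) = Argmin((g □ Q_G) ∘ L). -/
open scoped RealInnerProductSpace

noncomputable section

namespace PCC
open EReal

lemma coe_sub_le_of_coe_le {r s : ℝ} {b : EReal} (h : ((s:ℝ):EReal) ≤ b) :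
    (r:EReal) - b ≤ ((r - s : ℝ):EReal) := by
  induction b using EReal.rec with
  | bot => simp at h
  | top => simp
  | coe t =>
    rw [← EReal.coe_sub]
    exact_mod_cast sub_le_sub_left (by exact_mod_cast h) r

lemma neg_iSup' {ι : Sort*} (f : ι → EReal) : -(⨆ i, f i) = ⨅ i, -(f i) := by
  apply le_antisymm
  · exact le_iInf fun i => EReal.neg_le_neg_iff.mpr (le_iSup f i)
  · apply EReal.le_neg_of_le_neg
    exact iSup_le fun i => by
      simpa using EReal.le_neg_of_le_neg (iInf_le (fun i => -(f i)) i)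

lemma neg_iInf' {ι : Sort*} (f : ι → EReal) : -(⨅ i, f i) = ⨆ i, -(f i) := by
  rw [← neg_neg (⨆ i, -f i), neg_iSup']
  simp

/-- adding a real constant commutes with iSup -/
lemma coe_add_iSup {ι : Sort*} (r : ℝ) (f : ι → EReal) :
    (r:EReal) + ⨆ i, f i = ⨆ i, ((r:EReal) + f i) := by
  apply le_antisymm
  · have h : (⨆ i, f i) ≤ (⨆ i, ((r:EReal) + f i)) - (r:EReal) := by
      apply iSup_le fun i => ?_
      have h1 := le_iSup (fun i => (r:EReal) + f i) i
      have h2 : ((r:EReal) + f i) - (r:EReal) = f i := by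
        rw [add_comm]; exact EReal.add_sub_cancel_right
      calc f i = ((r:EReal) + f i) - (r:EReal) := h2.symm
        _ ≤ (⨆ i, ((r:EReal) + f i)) - (r:EReal) := EReal.sub_le_sub h1 le_rfl
    have := EReal.add_le_of_le_sub h
    rwa [add_comm] at this
  · exact iSup_le fun i => add_le_add_right (le_iSup f i) _

/-- adding a real constant commutes with iInf -/
lemma coe_add_iInf {ι : Sort*} (r : ℝ) (f : ι → EReal) :
    (r:EReal) + ⨅ i, f i = ⨅ i, ((r:EReal) + f i) := by
  apply le_antisymm
  · exact le_iInf fun i => add_le_add_right (iInf_le f i) _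
  · have h : (⨅ i, ((r:EReal) + f i)) - (r:EReal) ≤ ⨅ i, f i := by
      apply le_iInf fun i => ?_
      have h1 := iInf_le (fun i => (r:EReal) + f i) i
      have h2 : ((r:EReal) + f i) - (r:EReal) = f i := by
        rw [add_comm]; exact EReal.add_sub_cancel_right
      calc (⨅ i, ((r:EReal) + f i)) - (r:EReal) ≤ ((r:EReal) + f i) - (r:EReal) :=
            EReal.sub_le_sub h1 le_rfl
        _ = f i := h2
    calc (⨅ i, ((r:EReal) + f i)) = (⨅ i, ((r:EReal) + f i)) - (r:EReal) + (r:EReal) :=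
          EReal.sub_add_cancel.symm
      _ ≤ (⨅ i, f i) + (r:EReal) := add_le_add_left h _
      _ = (r:EReal) + ⨅ i, f i := add_comm _ _

lemma coe_sub_iSup {ι : Sort*} (r : ℝ) (f : ι → EReal) :
    (r:EReal) - ⨆ i, f i = ⨅ i, ((r:EReal) - f i) := by
  rw [sub_eq_add_neg, neg_iSup', coe_add_iInf]
  simp [sub_eq_add_neg]

lemma coe_sub_iInf {ι : Sort*} (r : ℝ) (f : ι → EReal) :
    (r:EReal) - ⨅ i, f i = ⨆ i, ((r:EReal) - f i) := by
  rw [sub_eq_add_neg, neg_iInf', coe_add_iSup]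
  simp [sub_eq_add_neg]

lemma iSup_add_coe {ι : Sort*} (r : ℝ) (f : ι → EReal) :
    (⨆ i, f i) + (r:EReal) = ⨆ i, (f i + (r:EReal)) := by
  rw [add_comm, coe_add_iSup]
  simp [add_comm]


lemma ereal_trichotomy (a : EReal) : a = ⊥ ∨ a = ⊤ ∨ ∃ t : ℝ, a = (t : EReal) := by
  induction a using EReal.rec with
  | bot => exact Or.inl rfl
  | top => exact Or.inr (Or.inl rfl)
  | coe t => exact Or.inr (Or.inr ⟨t, rfl⟩)

variable {E : Type*} [NormedAddCommGroup E] [InnerProductSpace ℝ E]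

lemma le_eConj (f : E → EReal) (u x : E) : ((⟪x, u⟫ : ℝ) : EReal) - f x ≤ eConj f u :=
  le_iSup (fun x => ((⟪x, u⟫ : ℝ) : EReal) - f x) x

lemma eConj_le {f : E → EReal} {u : E} {c : EReal}
    (h : ∀ x, ((⟪x, u⟫ : ℝ) : EReal) - f x ≤ c) : eConj f u ≤ c :=
  iSup_le h

lemma eConj_lsc (f : E → EReal) : LowerSemicontinuous (eConj f) := by
  apply lowerSemicontinuous_iSup
  intro x
  rcases ereal_trichotomy (f x) with hfx | hfx | ⟨t, hfx⟩
  · have : (fun u : E => ((⟪x, u⟫ : ℝ) : EReal) - f x) = fun _ => (⊤ : EReal) := by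
      funext u; rw [hfx, EReal.coe_sub_bot]
    rw [this]; exact lowerSemicontinuous_const
  · have : (fun u : E => ((⟪x, u⟫ : ℝ) : EReal) - f x) = fun _ => (⊥ : EReal) := by
      funext u; rw [hfx]; exact EReal.sub_top _
    rw [this]; exact lowerSemicontinuous_const
  · have : (fun u : E => ((⟪x, u⟫ : ℝ) : EReal) - f x)
        = fun u => (((⟪x, u⟫ - t : ℝ)) : EReal) := by
      funext u; rw [hfx, EReal.coe_sub]
    rw [this]
    apply Continuous.lowerSemicontinuous
    exact continuous_coe_real_ereal.comp ((continuous_const.inner continuous_id).sub continuous_const)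

/-- An affine minorant bounds the conjugate. -/
lemma eConj_le_of_minorant {f : E → EReal} {u : E} {β : ℝ}
    (h : ∀ z, ((⟪z, u⟫ + β : ℝ) : EReal) ≤ f z) : eConj f u ≤ ((-β : ℝ) : EReal) := by
  apply eConj_le
  intro x
  have := coe_sub_le_of_coe_le (r := ⟪x, u⟫) (h x)
  simpa using this

/-- An affine minorant of `f` gives a lower bound for the biconjugate. -/
lemma minorant_le_biconj {f : E → EReal} {u : E} {β : ℝ}
    (h : ∀ z, ((⟪z, u⟫ + β : ℝ) : EReal) ≤ f z) (x : E) :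
    ((⟪x, u⟫ + β : ℝ) : EReal) ≤ eConj (eConj f) x := by
  have h1 : eConj f u ≤ ((-β : ℝ) : EReal) := eConj_le_of_minorant h
  have h2 : ((⟪u, x⟫ : ℝ) : EReal) - ((-β : ℝ) : EReal) ≤ ((⟪u, x⟫ : ℝ) : EReal) - eConj f u :=
    EReal.sub_le_sub le_rfl h1
  calc ((⟪x, u⟫ + β : ℝ) : EReal) = ((⟪u, x⟫ : ℝ) : EReal) - ((-β : ℝ) : EReal) := by
        rw [← EReal.coe_sub]; norm_cast; rw [real_inner_comm]; ring
    _ ≤ ((⟪u, x⟫ : ℝ) : EReal) - eConj f u := h2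
    _ ≤ eConj (eConj f) x := le_eConj _ _ _

/-- The biconjugate is always below the function. -/
lemma biconj_le (f : E → EReal) (x : E) : eConj (eConj f) x ≤ f x := by
  by_cases hbot : ∃ z, f z = ⊥
  · obtain ⟨z, hz⟩ := hbot
    have htop : ∀ u, eConj f u = ⊤ := by
      intro u
      refine top_unique ?_
      have := le_eConj f u z
      rwa [hz, EReal.coe_sub_bot] at this
    have : eConj (eConj f) x = ⊥ := by
      refine le_bot_iff.mp (eConj_le fun u => ?_)
      rw [htop u, EReal.sub_top]
    rw [this]; exact bot_le
  · push_neg at hbot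
    apply eConj_le
    intro u
    rcases ereal_trichotomy (f x) with hfx | hfx | ⟨s, hfx⟩
    · exact absurd hfx (hbot x)
    · rw [hfx]; simp
    · -- want: ⟪u,x⟫ - eConj f u ≤ s
      have key : ((⟪x, u⟫ - s : ℝ) : EReal) ≤ eConj f u := by
        have := le_eConj f u x
        rwa [hfx, ← EReal.coe_sub] at this
      have := coe_sub_le_of_coe_le (r := ⟪u, x⟫) key
      rw [hfx]
      calc ((⟪u, x⟫ : ℝ) : EReal) - eConj f u ≤ ((⟪u, x⟫ - (⟪x, u⟫ - s) : ℝ) : EReal) := this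
        _ = ((s : ℝ) : EReal) := by norm_cast; rw [real_inner_comm]; ring

section FM
variable [CompleteSpace E]

lemma epigraph_closed {f : E → EReal} (hlsc : LowerSemicontinuous f) :
    IsClosed {p : E × ℝ | f p.1 ≤ (p.2 : EReal)} := by
  rw [← isOpen_compl_iff, isOpen_iff_mem_nhds]
  rintro ⟨x₀, t₀⟩ hp
  simp only [Set.mem_compl_iff, Set.mem_setOf_eq, not_le] at hp
  obtain ⟨c, hc1, hc2⟩ := EReal.exists_between_coe_real hp
  have hU : ∀ᶠ x in nhds x₀, (c : EReal) < f x := hlsc x₀ _ hc2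
  have hV : ∀ᶠ t : ℝ in nhds t₀, t < c := by
    apply Filter.Tendsto.eventually_lt_const _ (Filter.tendsto_id (α := ℝ))
    exact_mod_cast hc1
  filter_upwards [hU.prod_nhds hV] with p hq
  simp only [Set.mem_compl_iff, Set.mem_setOf_eq, not_le]
  exact lt_trans (by exact_mod_cast hq.2) hq.1

/-- Separation of a point below the epigraph. -/
lemma sep_epigraph {f : E → EReal} (hlsc : LowerSemicontinuous f) (hcvx : EConvex f)
    {x : E} {t : ℝ} (hxt : (t : EReal) < f x) :
    ∃ (ℓ₁ : E →L[ℝ] ℝ) (a c : ℝ), (∀ (z : E) (s : ℝ), f z ≤ (s : EReal) → ℓ₁ z + a * s < c) ∧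
      c < ℓ₁ x + a * t := by
  have hS : IsClosed {p : E × ℝ | f p.1 ≤ (p.2 : EReal)} := epigraph_closed hlsc
  have hx : (x, t) ∉ {p : E × ℝ | f p.1 ≤ (p.2 : EReal)} := fun h => absurd hxt (not_lt.mpr h)
  obtain ⟨ℓ, c, h1, h2⟩ := geometric_hahn_banach_closed_point hcvx hS hx
  refine ⟨ℓ.comp (ContinuousLinearMap.inl ℝ E ℝ), ℓ (0, 1), c, ?_, ?_⟩
  · intro z s hzs
    have hdec : ℓ (z, s) = ℓ (z, 0) + s * ℓ (0, 1) := by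
      have : (z, s) = (z, (0:ℝ)) + s • ((0:E), (1:ℝ)) := by
        simp [Prod.ext_iff]
      rw [this, map_add, map_smul, smul_eq_mul]
    have := h1 (z, s) hzs
    rw [hdec] at this
    simpa [mul_comm] using this
  · have hdec : ℓ (x, t) = ℓ (x, 0) + t * ℓ (0, 1) := by
      have : (x, t) = (x, (0:ℝ)) + t • ((0:E), (1:ℝ)) := by
        simp [Prod.ext_iff]
      rw [this, map_add, map_smul, smul_eq_mul]
    rw [hdec] at h2
    simpa [mul_comm] using h2

/-- From a "tilted" separation with negative vertical coefficient, an affine minorant. -/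
lemma minorant_of_sep {f : E → EReal} (hbot : ∀ z, f z ≠ ⊥)
    {ℓ₁ : E →L[ℝ] ℝ} {a c : ℝ} (ha : a < 0)
    (h1 : ∀ (z : E) (s : ℝ), f z ≤ (s : EReal) → ℓ₁ z + a * s < c) :
    ∃ (u : E) (β : ℝ), (∀ z, ((⟪z, u⟫ + β : ℝ) : EReal) ≤ f z) ∧
      (∀ y : E, ⟪y, u⟫ + β = (ℓ₁ y - c) / (-a)) := by
  set α : ℝ := -a with hα
  have hα0 : 0 < α := by simp [hα]; linarith
  refine ⟨(α⁻¹ : ℝ) • (InnerProductSpace.toDual ℝ E).symm (ℓ₁ : E →L[ℝ] ℝ), -c / α, ?_, ?_⟩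
  · intro z
    rcases ereal_trichotomy (f z) with hfz | hfz | ⟨s, hfz⟩
    · exact absurd hfz (hbot z)
    · rw [hfz]; exact le_top
    · rw [hfz]
      have hzs := h1 z s (le_of_eq hfz)
      have hinner : ⟪z, (α⁻¹ : ℝ) • (InnerProductSpace.toDual ℝ E).symm (ℓ₁ : E →L[ℝ] ℝ)⟫
          = α⁻¹ * ℓ₁ z := by
        rw [real_inner_smul_right, real_inner_comm, InnerProductSpace.toDual_symm_apply]
      rw [EReal.coe_le_coe_iff, hinner]
      have h3 : (ℓ₁ z - c) / α < s := by
        rw [div_lt_iff₀ hα0]; rw [hα]; nlinarith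
      have heq : α⁻¹ * ℓ₁ z + -c / α = (ℓ₁ z - c) / α := by
        field_simp
        ring
      rw [heq]
      linarith
  · intro y
    have hinner : ⟪y, (α⁻¹ : ℝ) • (InnerProductSpace.toDual ℝ E).symm (ℓ₁ : E →L[ℝ] ℝ)⟫
        = α⁻¹ * ℓ₁ y := by
      rw [real_inner_smul_right, real_inner_comm, InnerProductSpace.toDual_symm_apply]
    rw [hinner]
    field_simp
    ring

/-- Existence of a continuous affine minorant for a proper lsc convex function. -/
lemma exists_minorant {f : E → EReal} (hp : EProper f) (hlsc : LowerSemicontinuous f)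
    (hcvx : EConvex f) :
    ∃ (u : E) (β : ℝ), ∀ z, ((⟪z, u⟫ + β : ℝ) : EReal) ≤ f z := by
  obtain ⟨x₀, hx₀⟩ := hp.2
  rcases ereal_trichotomy (f x₀) with h | h | ⟨r₀, h⟩
  · exact absurd h (hp.1 x₀)
  · exact absurd h hx₀
  · have hxt : ((r₀ - 1 : ℝ) : EReal) < f x₀ := by rw [h]; exact_mod_cast sub_one_lt r₀
    obtain ⟨ℓ₁, a, c, h1, h2⟩ := sep_epigraph hlsc hcvx hxt
    have hr₀ := h1 x₀ r₀ (le_of_eq h)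
    have ha : a < 0 := by nlinarith
    obtain ⟨u, β, hm, _⟩ := minorant_of_sep hp.1 ha h1
    exact ⟨u, β, hm⟩

/-- **Fenchel–Moreau**: the biconjugate of a proper lsc convex function is itself. -/
theorem fenchelMoreau {f : E → EReal} (hp : EProper f) (hlsc : LowerSemicontinuous f)
    (hcvx : EConvex f) : eConj (eConj f) = f := by
  funext x
  refine le_antisymm (biconj_le f x) ?_
  by_contra hcon
  rw [not_le] at hcon
  obtain ⟨t, ht1, ht2⟩ := EReal.exists_between_coe_real hcon
  -- ht1 : biconj < t, ht2 : t < f x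
  have key : ((t : ℝ) : EReal) ≤ eConj (eConj f) x := by
    obtain ⟨ℓ₁, a, c, h1, h2⟩ := sep_epigraph hlsc hcvx ht2
    obtain ⟨x₀, hx₀⟩ := hp.2
    obtain ⟨r₀, hr₀⟩ : ∃ r₀ : ℝ, f x₀ = (r₀ : EReal) := by
      rcases ereal_trichotomy (f x₀) with h | h | ⟨r₀, h⟩
      · exact absurd h (hp.1 x₀)
      · exact absurd h hx₀
      · exact ⟨r₀, h⟩
    have ha : a ≤ 0 := by
      by_contra hpos
      rw [not_le] at hpos
      obtain ⟨n, hn⟩ := exists_nat_gt ((c - ℓ₁ x₀ - a * r₀) / a)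
      have hle : f x₀ ≤ ((r₀ + n : ℝ) : EReal) := by
        rw [hr₀]; exact_mod_cast by linarith [n.cast_nonneg (α := ℝ)]
      have := h1 x₀ (r₀ + n) hle
      rw [div_lt_iff₀ hpos] at hn
      nlinarith
    rcases eq_or_lt_of_le ha with haz | haneg
    · -- a = 0 case
      obtain ⟨u₀, β₀, hm₀⟩ := exists_minorant hp hlsc hcvx
      have hW : ∀ (z : E) (s : ℝ), f z ≤ (s : EReal) → ℓ₁ z < c := by
        intro z s hzs
        have := h1 z s hzs
        rw [haz] at this; simpa using this
      have hx : c < ℓ₁ x := by rw [haz] at h2; simpa using h2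
      set v : E := (InnerProductSpace.toDual ℝ E).symm (ℓ₁ : E →L[ℝ] ℝ) with hv
      have hvy : ∀ y : E, ⟪y, v⟫ = ℓ₁ y := fun y => by
        rw [hv, real_inner_comm, InnerProductSpace.toDual_symm_apply]
      set lam : ℝ := max 0 ((t - (⟪x, u₀⟫ + β₀)) / (ℓ₁ x - c)) with hlam
      have hlam0 : 0 ≤ lam := le_max_left _ _
      have hmin : ∀ z, ((⟪z, u₀ + lam • v⟫ + (β₀ - lam * c) : ℝ) : EReal) ≤ f z := by
        intro z
        rcases ereal_trichotomy (f z) with hfz | hfz | ⟨s, hfz⟩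
        · exact absurd hfz (hp.1 z)
        · rw [hfz]; exact le_top
        · have hz := hW z s (le_of_eq hfz)
          have hbase := hm₀ z
          rw [hfz] at hbase ⊢
          rw [EReal.coe_le_coe_iff] at hbase ⊢
          rw [inner_add_right, real_inner_smul_right, hvy]
          nlinarith
      have hval : t ≤ ⟪x, u₀ + lam • v⟫ + (β₀ - lam * c) := by
        rw [inner_add_right, real_inner_smul_right, hvy]
        rcases le_or_gt (t - (⟪x, u₀⟫ + β₀)) 0 with hneg | hposr
        · nlinarith
        · have hlameq : lam = (t - (⟪x, u₀⟫ + β₀)) / (ℓ₁ x - c) := by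
            rw [hlam, max_eq_right]
            exact div_nonneg (le_of_lt hposr) (by linarith)
          rw [hlameq]
          have heq2 : (t - (⟪x, u₀⟫ + β₀)) / (ℓ₁ x - c) * (ℓ₁ x - c) = t - (⟪x, u₀⟫ + β₀) :=
            div_mul_cancel₀ _ (by linarith : ℓ₁ x - c ≠ 0)
          nlinarith
      calc ((t : ℝ) : EReal) ≤ ((⟪x, u₀ + lam • v⟫ + (β₀ - lam * c) : ℝ) : EReal) := by
            exact_mod_cast hval
        _ ≤ eConj (eConj f) x := minorant_le_biconj hmin x
    · -- a < 0 case
      obtain ⟨u, β, hm, hval⟩ := minorant_of_sep hp.1 haneg h1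
      have hvx : t ≤ ⟪x, u⟫ + β := by
        rw [hval x]
        rw [le_div_iff₀ (by linarith : (0:ℝ) < -a)]
        nlinarith
      calc ((t : ℝ) : EReal) ≤ ((⟪x, u⟫ + β : ℝ) : EReal) := by exact_mod_cast hvx
        _ ≤ eConj (eConj f) x := minorant_le_biconj hm x
  have := lt_of_le_of_lt key ht1
  exact lt_irrefl _ (lt_of_le_of_lt key ht1)

end FM

section Envelope

lemma quad_identity (x z : E) : ‖x - z‖^2 = ‖x‖^2 - 2*⟪x,z⟫ + ‖z‖^2 := by
  rw [@norm_sub_sq_real E _ _ x z]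

/-- conjugate of the quadratic is itself -/
lemma eConj_eQ : eConj (eQ : E → EReal) = (eQ : E → EReal) := by
  funext u
  apply le_antisymm
  · apply eConj_le
    intro x
    show ((⟪x,u⟫ : ℝ) : EReal) - ((‖x‖^2/2 : ℝ) : EReal) ≤ ((‖u‖^2/2 : ℝ) : EReal)
    rw [← EReal.coe_sub, EReal.coe_le_coe_iff]
    nlinarith [quad_identity x u, sq_nonneg ‖x - u‖]
  · show ((‖u‖^2/2 : ℝ) : EReal) ≤ eConj (eQ : E → EReal) u
    have h := le_eConj (eQ : E → EReal) u u
    have h2 : ((⟪u,u⟫:ℝ):EReal) - (eQ u : EReal) = ((‖u‖^2/2 : ℝ) : EReal) := by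
      show ((⟪u,u⟫:ℝ):EReal) - ((‖u‖^2/2:ℝ):EReal) = _
      rw [← EReal.coe_sub]
      norm_cast
      rw [real_inner_self_eq_norm_sq]; ring
    rw [← h2]
    exact h

/-- split a real subtraction across a sum with one real summand -/
lemma sub_split (r₁ r₂ q : ℝ) (a : EReal) :
    ((r₁ + r₂ : ℝ) : EReal) - (a + ((q : ℝ) : EReal)) = ((r₁:EReal) - a) + ((r₂ - q : ℝ):EReal) := by
  rcases ereal_trichotomy a with h|h|⟨s,h⟩ <;> rw [h]
  · rw [show (⊥ : EReal) + ((q:ℝ):EReal) = ⊥ from EReal.bot_add _, EReal.coe_sub_bot,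
      EReal.coe_sub_bot, EReal.top_add_coe]
  · rw [show (⊤ : EReal) + ((q:ℝ):EReal) = ⊤ from EReal.top_add_coe _, EReal.sub_top,
      EReal.sub_top, EReal.bot_add]
  · norm_cast; ring

lemma iSup_add_left_real {ι : Sort*} [Nonempty ι] (a : EReal) (C : ι → ℝ) (q : ℝ)
    (h : (⨆ i, ((C i : ℝ) : EReal)) = ((q:ℝ) : EReal)) :
    (⨆ i, (a + ((C i : ℝ) : EReal))) = a + ((q:ℝ) : EReal) := by
  rcases ereal_trichotomy a with ha|ha|⟨s,ha⟩ <;> rw [ha]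
  · simp [EReal.bot_add]
  · simp only [EReal.top_add_coe]
    exact iSup_const
  · rw [← coe_add_iSup, h]

lemma env_eq_sub_conj (f : E → EReal) (hbot : ∀ z, f z ≠ ⊥) (x : E) :
    eInfConv f eQ x = ((‖x‖^2/2 : ℝ) : EReal) - eConj (fun z => f z + eQ z) x := by
  unfold eInfConv eConj
  rw [coe_sub_iSup]
  apply iInf_congr
  intro z
  simp only [eQ]
  rcases ereal_trichotomy (f z) with h|h|⟨s,h⟩ <;> rw [h]
  · exact absurd h (hbot z)
  · rw [EReal.top_add_coe, EReal.top_add_coe, EReal.sub_top, EReal.coe_sub_bot]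
  · norm_cast
    rw [real_inner_comm]
    linear_combination (1/2 : ℝ) * quad_identity x z

lemma infConv_sub_eQ (ψ : E → EReal) (hbot : ∀ z, ψ z ≠ ⊥) (x : E) :
    eInfConv (fun z => ψ z - eQ z) eQ x = ((‖x‖^2/2 : ℝ) : EReal) - eConj ψ x := by
  unfold eInfConv eConj
  rw [coe_sub_iSup]
  apply iInf_congr
  intro z
  simp only [eQ]
  rcases ereal_trichotomy (ψ z) with h|h|⟨s,h⟩ <;> rw [h]
  · exact absurd h (hbot z)
  · rw [EReal.top_sub_coe, EReal.top_add_coe, EReal.sub_top, EReal.coe_sub_bot]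
  · norm_cast
    rw [real_inner_comm]
    linear_combination (1/2 : ℝ) * quad_identity x z

/-- conjugate of inf-convolution with the quadratic -/
lemma eConj_infConv_eQ (f : E → EReal) (w : E) :
    eConj (eInfConv f eQ) w = eConj f w + ((‖w‖^2/2 : ℝ) : EReal) := by
  unfold eConj eInfConv
  have step1 : ∀ x : E, ((⟪x,w⟫:ℝ):EReal) - (⨅ z, (f z + eQ (x - z)))
      = ⨆ z, (((⟪x,w⟫:ℝ):EReal) - (f z + eQ (x - z))) := fun x => coe_sub_iInf _ _
  simp only [step1]
  rw [iSup_comm]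
  have step2 : ∀ z : E, (⨆ x, (((⟪x,w⟫:ℝ):EReal) - (f z + eQ (x - z))))
      = ⨆ v : E, (((⟪z + v,w⟫:ℝ):EReal) - (f z + eQ v)) := by
    intro z
    apply le_antisymm
    · apply iSup_le; intro x
      have := le_iSup (fun v : E => (((⟪z + v,w⟫:ℝ):EReal) - (f z + eQ v))) (x - z)
      simpa using this
    · apply iSup_le; intro v
      have := le_iSup (fun x : E => (((⟪x,w⟫:ℝ):EReal) - (f z + eQ (x - z)))) (z + v)
      simpa using this
  simp only [step2]
  have step3 : ∀ z v : E, (((⟪z + v,w⟫:ℝ):EReal) - (f z + eQ v))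
      = (((⟪z,w⟫:ℝ):EReal) - f z) + ((⟪v,w⟫ - ‖v‖^2/2 : ℝ):EReal) := by
    intro z v
    rw [show (⟪z + v, w⟫ : ℝ) = ⟪z,w⟫ + ⟪v,w⟫ by rw [inner_add_left]]
    exact sub_split _ _ _ _
  simp only [step3]
  have step4 : ∀ z : E, (⨆ v : E, ((((⟪z,w⟫:ℝ):EReal) - f z) + ((⟪v,w⟫ - ‖v‖^2/2 : ℝ):EReal)))
      = (((⟪z,w⟫:ℝ):EReal) - f z) + ((‖w‖^2/2:ℝ):EReal) := by
    intro z
    apply iSup_add_left_real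
    have := congrFun (eConj_eQ (E := E)) w
    unfold eConj at this
    calc (⨆ v : E, ((⟪v,w⟫ - ‖v‖^2/2 : ℝ):EReal))
        = ⨆ v : E, (((⟪v,w⟫:ℝ):EReal) - eQ v) := by
          apply iSup_congr; intro v
          simp only [eQ]
          exact EReal.coe_sub _ _
      _ = ((‖w‖^2/2:ℝ):EReal) := this
  simp only [step4]
  exact (iSup_add_coe _ _).symm

end Envelope

section Convexity

lemma quad_combo {a b : ℝ} (hab : a + b = 1) (x y : E) :
    ‖a•x + b•y‖^2 = a*‖x‖^2 + b*‖y‖^2 - a*b*‖x-y‖^2 := by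
  have hb : b = 1 - a := by linarith
  subst hb
  simp only [← real_inner_self_eq_norm_sq, inner_add_left, inner_add_right, inner_sub_left,
    inner_sub_right, real_inner_smul_left, real_inner_smul_right]
  rw [real_inner_comm y x]
  ring

lemma EConvex_coe_of_convexOn {f : E → ℝ} (h : ConvexOn ℝ Set.univ f) :
    EConvex (fun x => ((f x : ℝ) : EReal)) := by
  intro p hp q hq a b ha hb hab
  simp only [Set.mem_setOf_eq] at hp hq ⊢
  rw [EReal.coe_le_coe_iff] at hp hq
  show ((f ((a • p + b • q).1) : ℝ) : EReal) ≤ (((a • p + b • q).2 : ℝ) : EReal)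
  rw [EReal.coe_le_coe_iff]
  have hc := h.2 (Set.mem_univ p.1) (Set.mem_univ q.1) ha hb hab
  have h1 : (a • p + b • q).1 = a • p.1 + b • q.1 := rfl
  have h2 : (a • p + b • q).2 = a * p.2 + b * q.2 := rfl
  rw [h1, h2]
  simp only [smul_eq_mul] at hc
  nlinarith

lemma econvex_ineq {f : E → EReal} (hcvx : EConvex f) {z₁ z₂ : E} {r₁ r₂ : ℝ} {a b : ℝ}
    (h1 : f z₁ ≤ ((r₁:ℝ):EReal)) (h2 : f z₂ ≤ ((r₂:ℝ):EReal)) (ha : 0 ≤ a) (hb : 0 ≤ b)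
    (hab : a + b = 1) :
    f (a • z₁ + b • z₂) ≤ ((a*r₁ + b*r₂ : ℝ) : EReal) := by
  have hmem1 : ((z₁, r₁) : E × ℝ) ∈ {p : E × ℝ | f p.1 ≤ (p.2 : EReal)} := h1
  have hmem2 : ((z₂, r₂) : E × ℝ) ∈ {p : E × ℝ | f p.1 ≤ (p.2 : EReal)} := h2
  have hmem := hcvx hmem1 hmem2 ha hb hab
  have h1' : (a • ((z₁, r₁) : E × ℝ) + b • ((z₂, r₂) : E × ℝ)).1 = a • z₁ + b • z₂ := rfl
  have h2' : (a • ((z₁, r₁) : E × ℝ) + b • ((z₂, r₂) : E × ℝ)).2 = a * r₁ + b * r₂ := rfl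
  have := Set.mem_setOf_eq ▸ hmem
  rw [h1', h2'] at this
  exact this

/-- The Moreau envelope of a proper lsc convex function is finite everywhere. -/
lemma env_bounds [CompleteSpace E] {f : E → EReal} (hp : EProper f)
    (hlsc : LowerSemicontinuous f) (hcvx : EConvex f) (y : E) :
    eInfConv f eQ y ≠ ⊥ ∧ eInfConv f eQ y ≠ ⊤ := by
  obtain ⟨u₀, β₀, hm⟩ := exists_minorant hp hlsc hcvx
  obtain ⟨z₀, hz₀⟩ := hp.2
  obtain ⟨r₀, hr₀⟩ : ∃ r : ℝ, f z₀ = ((r:ℝ):EReal) := by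
    rcases ereal_trichotomy (f z₀) with h|h|⟨r,h⟩
    · exact absurd h (hp.1 z₀)
    · exact absurd h hz₀
    · exact ⟨r, h⟩
  constructor
  · have hlow : ((⟪y,u₀⟫ + β₀ - ‖u₀‖^2/2 : ℝ):EReal) ≤ eInfConv f eQ y := by
      apply le_iInf; intro z
      calc ((⟪y,u₀⟫ + β₀ - ‖u₀‖^2/2 : ℝ):EReal)
          ≤ ((⟪z,u₀⟫ + β₀ + ‖y-z‖^2/2 : ℝ):EReal) := by
            rw [EReal.coe_le_coe_iff]
            have hq := quad_identity (y-z) u₀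
            have hi : ⟪y-z, u₀⟫ = ⟪y,u₀⟫ - ⟪z,u₀⟫ := inner_sub_left y z u₀
            nlinarith [sq_nonneg ‖(y-z) - u₀‖]
        _ = ((⟪z,u₀⟫ + β₀ : ℝ):EReal) + ((‖y-z‖^2/2 : ℝ):EReal) := by
            rw [← EReal.coe_add]
        _ ≤ f z + eQ (y-z) := add_le_add (hm z) le_rfl
    intro hbot
    rw [hbot] at hlow
    exact EReal.coe_ne_bot _ (le_bot_iff.mp hlow)
  · have hup : eInfConv f eQ y ≤ ((r₀ + ‖y - z₀‖^2/2 : ℝ):EReal) := by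
      have h := iInf_le (fun z => f z + eQ (y-z)) z₀
      rw [hr₀] at h
      calc eInfConv f eQ y ≤ ((r₀:ℝ):EReal) + eQ (y - z₀) := h
        _ = ((r₀ + ‖y - z₀‖^2/2 : ℝ):EReal) := by
            simp only [eQ]; rw [← EReal.coe_add]
    intro htop
    rw [htop] at hup
    exact EReal.coe_ne_top _ (top_le_iff.mp hup)

end Convexity

section Main
variable {H : Type*} {G : Type*}
  [NormedAddCommGroup H] [InnerProductSpace ℝ H] [CompleteSpace H]
  [NormedAddCommGroup G] [InnerProductSpace ℝ G] [CompleteSpace G]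

/-- real-valued Moreau envelope precomposed with `L` -/
def envR (L : H →L[ℝ] G) (g : G → EReal) : H → ℝ := fun x => (eInfConv g eQ (L x)).toReal

/-- `Q - envR` -/
def kapR (L : H →L[ℝ] G) (g : G → EReal) : H → ℝ := fun x => ‖x‖^2/2 - envR L g x

variable {L : H →L[ℝ] G} {g : G → EReal}

lemma envR_spec (hp : EProper g) (hlsc : LowerSemicontinuous g) (hcvx : EConvex g) (x : H) :
    eInfConv g eQ (L x) = ((envR L g x : ℝ) : EReal) :=
  (EReal.coe_toReal (env_bounds hp hlsc hcvx (L x)).2 (env_bounds hp hlsc hcvx (L x)).1).symm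

lemma near_min (hp : EProper g) (y : G) {d : ℝ} (hd : eInfConv g eQ y < ((d:ℝ):EReal)) :
    ∃ (z : G) (r : ℝ), g z = ((r:ℝ):EReal) ∧ r + ‖y - z‖^2/2 < d := by
  unfold eInfConv at hd
  obtain ⟨z, hz⟩ := iInf_lt_iff.mp hd
  have hgtop : g z ≠ ⊤ := by
    intro h
    rw [h] at hz
    simp only [eQ] at hz
    rw [EReal.top_add_coe] at hz
    exact absurd hz (by simp)
  obtain ⟨r, hr⟩ : ∃ r : ℝ, g z = ((r:ℝ):EReal) := by
    rcases ereal_trichotomy (g z) with h|h|⟨r,h⟩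
    · exact absurd h (hp.1 z)
    · exact absurd h hgtop
    · exact ⟨r, h⟩
  refine ⟨z, r, hr, ?_⟩
  rw [hr] at hz
  simp only [eQ] at hz
  rw [← EReal.coe_add] at hz
  exact_mod_cast hz

lemma env_le_point (hp : EProper g) (hlsc : LowerSemicontinuous g) (hcvx : EConvex g)
    (x : H) {z : G} {r : ℝ} (hr : g z = ((r:ℝ):EReal)) :
    envR L g x ≤ r + ‖L x - z‖^2/2 := by
  have h := iInf_le (fun w => g w + eQ (L x - w)) z
  have h2 : eInfConv g eQ (L x) ≤ ((r + ‖L x - z‖^2/2 : ℝ):EReal) := by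
    calc eInfConv g eQ (L x) ≤ g z + eQ (L x - z) := h
      _ = ((r + ‖L x - z‖^2/2 : ℝ):EReal) := by
          rw [hr]; simp only [eQ]; rw [← EReal.coe_add]
  rw [envR_spec hp hlsc hcvx x] at h2
  exact_mod_cast h2

lemma envR_convexOn (hp : EProper g) (hlsc : LowerSemicontinuous g) (hcvx : EConvex g) :
    ConvexOn ℝ Set.univ (envR L g) := by
  refine ⟨convex_univ, fun x _ y _ a b ha hb hab => ?_⟩
  apply le_of_forall_pos_le_add
  intro ε hε
  have hd1 : eInfConv g eQ (L x) < ((envR L g x + ε/2 : ℝ):EReal) := by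
    rw [envR_spec hp hlsc hcvx x]; exact_mod_cast by linarith
  have hd2 : eInfConv g eQ (L y) < ((envR L g y + ε/2 : ℝ):EReal) := by
    rw [envR_spec hp hlsc hcvx y]; exact_mod_cast by linarith
  obtain ⟨z₁, r₁, hg1, hlt1⟩ := near_min hp (L x) hd1
  obtain ⟨z₂, r₂, hg2, hlt2⟩ := near_min hp (L y) hd2
  have hgc := econvex_ineq hcvx (le_of_eq hg1) (le_of_eq hg2) ha hb hab
  have hvec : L (a•x + b•y) - (a•z₁ + b•z₂) = a•(L x - z₁) + b•(L y - z₂) := by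
    rw [smul_sub, smul_sub, map_add, map_smul, map_smul]
    abel
  have hub : eInfConv g eQ (L (a•x+b•y))
      ≤ ((a*r₁+b*r₂ + ‖a•(L x - z₁) + b•(L y - z₂)‖^2/2 : ℝ):EReal) := by
    have h := iInf_le (fun z => g z + eQ (L (a•x+b•y) - z)) (a•z₁+b•z₂)
    calc eInfConv g eQ (L (a•x+b•y)) ≤ g (a•z₁+b•z₂) + eQ (L (a•x+b•y) - (a•z₁+b•z₂)) := h
      _ ≤ ((a*r₁+b*r₂:ℝ):EReal) + ((‖a•(L x - z₁) + b•(L y - z₂)‖^2/2:ℝ):EReal) := by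
          apply add_le_add hgc
          rw [hvec]
          exact le_of_eq rfl
      _ = ((a*r₁+b*r₂ + ‖a•(L x - z₁) + b•(L y - z₂)‖^2/2 : ℝ):EReal) := by
          rw [← EReal.coe_add]
  have hr : envR L g (a•x+b•y) ≤ a*r₁+b*r₂ + ‖a•(L x - z₁) + b•(L y - z₂)‖^2/2 := by
    rw [envR_spec hp hlsc hcvx] at hub
    exact_mod_cast hub
  have hq := quad_combo hab (L x - z₁) (L y - z₂)
  have hkey : 0 ≤ a*b*‖(L x - z₁) - (L y - z₂)‖^2 := by positivity
  have hm1 := mul_le_mul_of_nonneg_left (le_of_lt hlt1) ha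
  have hm2 := mul_le_mul_of_nonneg_left (le_of_lt hlt2) hb
  simp only [smul_eq_mul]
  nlinarith

lemma envR_continuous (hp : EProper g) (hlsc : LowerSemicontinuous g) (hcvx : EConvex g) :
    Continuous (envR L g) := by
  obtain ⟨z₀, hz₀⟩ := hp.2
  obtain ⟨r₀, hr₀⟩ : ∃ r : ℝ, g z₀ = ((r:ℝ):EReal) := by
    rcases ereal_trichotomy (g z₀) with h|h|⟨r,h⟩
    · exact absurd h (hp.1 z₀)
    · exact absurd h hz₀
    · exact ⟨r, h⟩
  have hub : ∀ x : H, envR L g x ≤ r₀ + ‖L x - z₀‖^2/2 := fun x =>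
    env_le_point hp hlsc hcvx x hr₀
  have hconv := envR_convexOn (L := L) hp hlsc hcvx
  rw [← continuousOn_univ]
  apply ((hconv.continuousOn_tfae isOpen_univ ⟨0, Set.mem_univ 0⟩).out 4 1).mp
  intro x₀ _
  refine ⟨r₀ + ‖L x₀ - z₀‖^2/2 + 1, ?_⟩
  rw [Filter.eventually_map]
  have hcont2 : Continuous fun y : H => r₀ + ‖L y - z₀‖^2/2 := by
    apply continuous_const.add
    apply Continuous.div_const
    exact (((L.continuous).sub continuous_const).norm.pow 2)
  have hev : ∀ᶠ y in nhds x₀, r₀ + ‖L y - z₀‖^2/2 < r₀ + ‖L x₀ - z₀‖^2/2 + 1 :=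
    (hcont2.continuousAt (x := x₀)).eventually_lt_const (by linarith)
  filter_upwards [hev] with y hy
  exact le_trans (hub y) (le_of_lt hy)

lemma kapR_convexOn (hL1 : ‖L‖ ≤ 1) (hp : EProper g) (hlsc : LowerSemicontinuous g)
    (hcvx : EConvex g) : ConvexOn ℝ Set.univ (kapR L g) := by
  refine ⟨convex_univ, fun x _ y _ a b ha hb hab => ?_⟩
  apply le_of_forall_pos_le_add
  intro ε hε
  have hd : eInfConv g eQ (L (a•x+b•y)) < ((envR L g (a•x+b•y) + ε : ℝ):EReal) := by
    rw [envR_spec hp hlsc hcvx]; exact_mod_cast by linarith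
  obtain ⟨z, rz, hgz, hlt⟩ := near_min hp (L (a•x+b•y)) hd
  have hlow1 : envR L g x ≤ rz + ‖L x - z‖^2/2 := env_le_point hp hlsc hcvx x hgz
  have hlow2 : envR L g y ≤ rz + ‖L y - z‖^2/2 := env_le_point hp hlsc hcvx y hgz
  have hz' : a•z + b•z = z := by rw [← add_smul, hab, one_smul]
  have hvec : L (a•x+b•y) - z = a•(L x - z) + b•(L y - z) := by
    calc L (a•x+b•y) - z = a•(L x) + b•(L y) - (a•z + b•z) := by
          rw [map_add, map_smul, map_smul, hz']
      _ = a•(L x - z) + b•(L y - z) := by rw [smul_sub, smul_sub]; abel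
  have hQc : ‖L (a•x+b•y) - z‖^2
      = a*‖L x - z‖^2 + b*‖L y - z‖^2 - a*b*‖(L x - z)-(L y - z)‖^2 := by
    rw [hvec]; exact quad_combo hab _ _
  have hsub : (L x - z) - (L y - z) = L (x - y) := by rw [map_sub]; abel
  have hQ0 : ‖a•x+b•y‖^2 = a*‖x‖^2 + b*‖y‖^2 - a*b*‖x-y‖^2 := quad_combo hab x y
  have hLn : ‖L (x-y)‖^2 ≤ ‖x-y‖^2 := by
    have h1 : ‖L (x-y)‖ ≤ ‖x-y‖ := by
      calc ‖L (x-y)‖ ≤ ‖L‖*‖x-y‖ := L.le_opNorm _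
        _ ≤ 1*‖x-y‖ := mul_le_mul_of_nonneg_right hL1 (norm_nonneg _)
        _ = ‖x-y‖ := one_mul _
    nlinarith [norm_nonneg (L (x-y)), norm_nonneg (x-y)]
  have hkey : 0 ≤ a*b*(‖x-y‖^2 - ‖L (x-y)‖^2) :=
    mul_nonneg (mul_nonneg ha hb) (by linarith)
  rw [hsub] at hQc
  simp only [kapR, smul_eq_mul]
  have hm1 := mul_le_mul_of_nonneg_left hlow1 ha
  have hm2 := mul_le_mul_of_nonneg_left hlow2 hb
  have hrz : a*rz + b*rz = rz := by rw [← add_mul, hab, one_mul]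
  nlinarith [hlt, hQc, hQ0, hkey]

lemma kapR_identity (hp : EProper g) (hlsc : LowerSemicontinuous g) (hcvx : EConvex g) (x : H) :
    ((kapR L g x : ℝ) : EReal)
      = ((‖x‖^2/2 - ‖L x‖^2/2 : ℝ):EReal) + eConj (fun z => g z + eQ z) (L x) := by
  have henv := env_eq_sub_conj g hp.1 (L x)
  rw [envR_spec hp hlsc hcvx x] at henv
  rcases ereal_trichotomy (eConj (fun z => g z + eQ z) (L x)) with h|h|⟨s,h⟩
  · rw [h, EReal.coe_sub_bot] at henv
    exact absurd henv.symm (by simp)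
  · rw [h, EReal.sub_top] at henv
    exact absurd henv (by simp)
  · rw [h] at henv ⊢
    rw [← EReal.coe_sub] at henv
    rw [← EReal.coe_add, EReal.coe_eq_coe_iff]
    have : envR L g x = ‖L x‖^2/2 - s := by exact_mod_cast henv
    simp only [kapR]
    linarith

lemma kap_lsc (hp : EProper g) (hlsc : LowerSemicontinuous g) (hcvx : EConvex g) :
    LowerSemicontinuous (fun x : H => ((kapR L g x : ℝ):EReal)) := by
  have hfun : (fun x : H => ((kapR L g x : ℝ):EReal)) = fun x =>
      ((‖x‖^2/2 - ‖L x‖^2/2 : ℝ):EReal) + eConj (fun z => g z + eQ z) (L x) :=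
    funext (kapR_identity hp hlsc hcvx)
  rw [hfun]
  apply LowerSemicontinuous.add'
  · apply Continuous.lowerSemicontinuous
    apply continuous_coe_real_ereal.comp
    apply Continuous.sub
    · exact (continuous_norm.pow 2).div_const 2
    · exact ((L.continuous.norm).pow 2).div_const 2
  · exact LowerSemicontinuous.comp (f := eConj (fun z => g z + eQ z)) (eConj_lsc _) L.continuous
  · intro x
    exact EReal.continuousAt_add (Or.inl (EReal.coe_ne_top _)) (Or.inl (EReal.coe_ne_bot _))

end Main

end PCC

variable {H G : Type*}
  [NormedAddCommGroup H] [InnerProductSpace ℝ H] [CompleteSpace H]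
  [NormedAddCommGroup G] [InnerProductSpace ℝ G] [CompleteSpace G]

/-- For `0 < ‖L‖ ≤ 1` and `g ∈ Γ₀(G)`: `(L ▶ g) □ Q_H = (g □ Q_G) ∘ L`, and
`L⁻¹(Argmin g) ⊆ Argmin (L ▶ g) = Argmin ((g □ Q_G) ∘ L)`. -/
theorem pccomp_envelope (L : H →L[ℝ] G) (hL0 : 0 < ‖L‖) (hL1 : ‖L‖ ≤ 1)
    (g : G → EReal) (hp : EProper g) (hlsc : LowerSemicontinuous g)
    (hcvx : EConvex g) :
    (∀ x, eInfConv (pccomp L g) eQ x = eInfConv g eQ (L x)) ∧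
    L ⁻¹' {y : G | ∀ z, g y ≤ g z} ⊆ {x : H | ∀ z, pccomp L g x ≤ pccomp L g z} ∧
    {x : H | ∀ z, pccomp L g x ≤ pccomp L g z} =
      {x : H | ∀ z, eInfConv g eQ (L x) ≤ eInfConv g eQ (L z)} := by
  have hg2 : eConj (eConj g) = g := PCC.fenchelMoreau hp hlsc hcvx
  have hspec : ∀ x : H, eInfConv g eQ (L x) = ((PCC.envR L g x : ℝ) : EReal) :=
    fun x => PCC.envR_spec hp hlsc hcvx x
  have hccomp : pccomp L g = eConj (fun u : H => (eConj (fun x : H => ((PCC.envR L g x : ℝ) : EReal))) u - eQ u) := by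
    unfold pccomp pcomp
    rw [hg2, show (fun w : H => eInfConv g eQ (L w)) = (fun x : H => ((PCC.envR L g x : ℝ) : EReal)) from funext hspec]
  have hφconv := PCC.envR_convexOn (L := L) hp hlsc hcvx
  have hφcont := PCC.envR_continuous (L := L) hp hlsc hcvx
  have hφproper : EProper (fun x : H => ((PCC.envR L g x : ℝ) : EReal)) := ⟨fun x => EReal.coe_ne_bot _, ⟨0, EReal.coe_ne_top _⟩⟩
  have hφlsc : LowerSemicontinuous (fun x : H => ((PCC.envR L g x : ℝ) : EReal)) :=
    (continuous_coe_real_ereal.comp hφcont).lowerSemicontinuous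
  have hφcvx : EConvex (fun x : H => ((PCC.envR L g x : ℝ) : EReal)) := PCC.EConvex_coe_of_convexOn hφconv
  have hφFM : eConj (eConj (fun x : H => ((PCC.envR L g x : ℝ) : EReal))) = (fun x : H => ((PCC.envR L g x : ℝ) : EReal)) := PCC.fenchelMoreau hφproper hφlsc hφcvx
  have hψbot : ∀ z, (eConj (fun x : H => ((PCC.envR L g x : ℝ) : EReal))) z ≠ ⊥ := by
    intro z hzbot
    have hb := PCC.le_eConj (fun x : H => ((PCC.envR L g x : ℝ) : EReal)) z 0
    rw [hzbot, ← EReal.coe_sub] at hb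
    exact EReal.coe_ne_bot _ (le_bot_iff.mp hb)
  have hFQ : eInfConv (fun u : H => (eConj (fun x : H => ((PCC.envR L g x : ℝ) : EReal))) u - eQ u) eQ = (fun x : H => ((PCC.kapR L g x : ℝ) : EReal)) := by
    funext x
    rw [PCC.infConv_sub_eQ (eConj (fun x : H => ((PCC.envR L g x : ℝ) : EReal))) hψbot x,
      show eConj (eConj (fun x : H => ((PCC.envR L g x : ℝ) : EReal))) x = (fun x : H => ((PCC.envR L g x : ℝ) : EReal)) x from congrFun hφFM x]
    show ((‖x‖^2/2 : ℝ) : EReal) - ((PCC.envR L g x : ℝ) : EReal) = ((PCC.kapR L g x : ℝ) : EReal)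
    rw [← EReal.coe_sub]
    rfl
  have hκproper : EProper (fun x : H => ((PCC.kapR L g x : ℝ) : EReal)) := ⟨fun x => EReal.coe_ne_bot _, ⟨0, EReal.coe_ne_top _⟩⟩
  have hκlsc : LowerSemicontinuous (fun x : H => ((PCC.kapR L g x : ℝ) : EReal)) := PCC.kap_lsc hp hlsc hcvx
  have hκcvx : EConvex (fun x : H => ((PCC.kapR L g x : ℝ) : EReal)) :=
    PCC.EConvex_coe_of_convexOn (PCC.kapR_convexOn hL1 hp hlsc hcvx)
  have hκFM : eConj (eConj (fun x : H => ((PCC.kapR L g x : ℝ) : EReal))) = (fun x : H => ((PCC.kapR L g x : ℝ) : EReal)) := PCC.fenchelMoreau hκproper hκlsc hκcvx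
  obtain ⟨uφ, βφ, hmφ⟩ := PCC.exists_minorant hφproper hφlsc hφcvx
  have hψu : (eConj (fun x : H => ((PCC.envR L g x : ℝ) : EReal))) uφ ≤ ((-βφ : ℝ) : EReal) := PCC.eConj_le_of_minorant hmφ
  have hFtop : (fun u : H => (eConj (fun x : H => ((PCC.envR L g x : ℝ) : EReal))) u - eQ u) uφ ≠ ⊤ := by
    show (eConj (fun x : H => ((PCC.envR L g x : ℝ) : EReal))) uφ - eQ uφ ≠ ⊤
    rcases PCC.ereal_trichotomy ((eConj (fun x : H => ((PCC.envR L g x : ℝ) : EReal))) uφ) with h|h|⟨r,h⟩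
    · rw [h, EReal.bot_sub]; simp
    · rw [h] at hψu; exact absurd hψu (by simp)
    · rw [h]
      show ((r : ℝ) : EReal) - ((‖uφ‖^2/2 : ℝ) : EReal) ≠ ⊤
      rw [← EReal.coe_sub]
      exact EReal.coe_ne_top _
  have hhbot : ∀ w, eConj (fun u : H => (eConj (fun x : H => ((PCC.envR L g x : ℝ) : EReal))) u - eQ u) w ≠ ⊥ := by
    intro w hw
    have h := PCC.le_eConj (fun u : H => (eConj (fun x : H => ((PCC.envR L g x : ℝ) : EReal))) u - eQ u) w uφ
    rw [hw] at h
    beta_reduce at h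
    have hb := le_bot_iff.mp h
    rcases PCC.ereal_trichotomy ((eConj (fun x : H => ((PCC.envR L g x : ℝ) : EReal))) uφ - eQ uφ) with h2|h2|⟨r,h2⟩
    · rw [h2, EReal.coe_sub_bot] at hb; exact absurd hb (by simp)
    · exact hFtop h2
    · rw [h2, ← EReal.coe_sub] at hb; exact EReal.coe_ne_bot _ hb
  have hhQ : (fun w : H => eConj (fun u : H => (eConj (fun x : H => ((PCC.envR L g x : ℝ) : EReal))) u - eQ u) w + eQ w) = eConj (fun x : H => ((PCC.kapR L g x : ℝ) : EReal)) := by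
    funext w
    rw [← hFQ, PCC.eConj_infConv_eQ (fun u : H => (eConj (fun x : H => ((PCC.envR L g x : ℝ) : EReal))) u - eQ u) w]
    rfl
  have part1 : ∀ x : H, eInfConv (eConj (fun u : H => (eConj (fun x : H => ((PCC.envR L g x : ℝ) : EReal))) u - eQ u)) eQ x = ((PCC.envR L g x : ℝ) : EReal) := by
    intro x
    rw [PCC.env_eq_sub_conj (eConj (fun u : H => (eConj (fun x : H => ((PCC.envR L g x : ℝ) : EReal))) u - eQ u)) hhbot x, hhQ,
      show eConj (eConj (fun x : H => ((PCC.kapR L g x : ℝ) : EReal))) x = (fun x : H => ((PCC.kapR L g x : ℝ) : EReal)) x from congrFun hκFM x]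
    show ((‖x‖^2/2 : ℝ) : EReal) - ((PCC.kapR L g x : ℝ) : EReal) = ((PCC.envR L g x : ℝ) : EReal)
    rw [← EReal.coe_sub, EReal.coe_eq_coe_iff]
    simp only [PCC.kapR]
    ring
  have env_part : ∀ x : H, eInfConv (pccomp L g) eQ x = eInfConv g eQ (L x) := by
    intro x
    rw [hccomp, part1 x, ← hspec x]
  have hlow_h : ∀ (k : H → EReal) (w : H), eInfConv k eQ w ≤ k w := by
    intro k w
    have h := iInf_le (fun z => k z + eQ (w - z)) w
    calc eInfConv k eQ w ≤ k w + eQ (w - w) := h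
      _ = k w := by
          rw [sub_self]
          show k w + ((‖(0:H)‖^2/2 : ℝ) : EReal) = k w
          simp
  have hQnn : ∀ (E' : Type) (v : E'), True := fun _ _ => trivial
  have hset : {x : H | ∀ z, pccomp L g x ≤ pccomp L g z}
      = {x : H | ∀ z, eInfConv g eQ (L x) ≤ eInfConv g eQ (L z)} := by
    ext x
    simp only [Set.mem_setOf_eq, hccomp]
    constructor
    · intro hx z
      rw [← env_part x, ← env_part z, hccomp]
      calc eInfConv (eConj (fun u : H => (eConj (fun x : H => ((PCC.envR L g x : ℝ) : EReal))) u - eQ u)) eQ x ≤ eConj (fun u : H => (eConj (fun x : H => ((PCC.envR L g x : ℝ) : EReal))) u - eQ u) x := hlow_h _ x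
        _ ≤ eInfConv (eConj (fun u : H => (eConj (fun x : H => ((PCC.envR L g x : ℝ) : EReal))) u - eQ u)) eQ z := by
            apply le_iInf; intro w
            calc eConj (fun u : H => (eConj (fun x : H => ((PCC.envR L g x : ℝ) : EReal))) u - eQ u) x ≤ eConj (fun u : H => (eConj (fun x : H => ((PCC.envR L g x : ℝ) : EReal))) u - eQ u) w := hx w
              _ ≤ eConj (fun u : H => (eConj (fun x : H => ((PCC.envR L g x : ℝ) : EReal))) u - eQ u) w + eQ (z - w) := by
                  apply le_add_of_nonneg_right
                  show (0:EReal) ≤ ((‖z - w‖^2/2 : ℝ) : EReal)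
                  exact_mod_cast (by positivity : (0:ℝ) ≤ ‖z - w‖^2/2)
    · intro hx z
      have henvx : ∀ w : H, eInfConv (eConj (fun u : H => (eConj (fun x : H => ((PCC.envR L g x : ℝ) : EReal))) u - eQ u)) eQ x ≤ eInfConv (eConj (fun u : H => (eConj (fun x : H => ((PCC.envR L g x : ℝ) : EReal))) u - eQ u)) eQ w := by
        intro w
        rw [part1 x, part1 w, ← hspec x, ← hspec w]
        exact hx w
      have hm_le : ∀ w, ((PCC.envR L g x : ℝ) : EReal) ≤ eConj (fun u : H => (eConj (fun x : H => ((PCC.envR L g x : ℝ) : EReal))) u - eQ u) w := by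
        intro w
        calc ((PCC.envR L g x : ℝ) : EReal) = eInfConv (eConj (fun u : H => (eConj (fun x : H => ((PCC.envR L g x : ℝ) : EReal))) u - eQ u)) eQ x := (part1 x).symm
          _ ≤ eInfConv (eConj (fun u : H => (eConj (fun x : H => ((PCC.envR L g x : ℝ) : EReal))) u - eQ u)) eQ w := henvx w
          _ ≤ eConj (fun u : H => (eConj (fun x : H => ((PCC.envR L g x : ℝ) : EReal))) u - eQ u) w := hlow_h _ w
      have hxle : eConj (fun u : H => (eConj (fun x : H => ((PCC.envR L g x : ℝ) : EReal))) u - eQ u) x ≤ ((PCC.envR L g x : ℝ) : EReal) := by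
        by_contra hcon
        rw [not_le] at hcon
        obtain ⟨c, hc1, hc2⟩ := EReal.exists_between_coe_real hcon
        have hc1' : PCC.envR L g x < c := by exact_mod_cast hc1
        have hev := PCC.eConj_lsc (fun u : H => (eConj (fun x : H => ((PCC.envR L g x : ℝ) : EReal))) u - eQ u) x _ hc2
        obtain ⟨ε, hε, hball⟩ := Metric.eventually_nhds_iff.mp hev
        have hδ : 0 < min (c - PCC.envR L g x) (ε^2/2) := lt_min (by linarith) (by positivity)
        have hlt : eInfConv (eConj (fun u : H => (eConj (fun x : H => ((PCC.envR L g x : ℝ) : EReal))) u - eQ u)) eQ x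
            < ((PCC.envR L g x + min (c - PCC.envR L g x) (ε^2/2) : ℝ) : EReal) := by
          rw [part1 x]
          exact_mod_cast by linarith
        unfold eInfConv at hlt
        obtain ⟨w, hw⟩ := iInf_lt_iff.mp hlt
        beta_reduce at hw
        have hwtop : eConj (fun u : H => (eConj (fun x : H => ((PCC.envR L g x : ℝ) : EReal))) u - eQ u) w ≠ ⊤ := by
          intro h
          rw [h, show eQ (x - w) = ((‖x-w‖^2/2 : ℝ) : EReal) from rfl, EReal.top_add_coe] at hw
          exact absurd hw (by simp)
        obtain ⟨hwr, hhw⟩ : ∃ r : ℝ, eConj (fun u : H => (eConj (fun x : H => ((PCC.envR L g x : ℝ) : EReal))) u - eQ u) w = ((r:ℝ):EReal) := by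
          rcases PCC.ereal_trichotomy (eConj (fun u : H => (eConj (fun x : H => ((PCC.envR L g x : ℝ) : EReal))) u - eQ u) w) with h|h|⟨r,h⟩
          · exact absurd h (hhbot w)
          · exact absurd h hwtop
          · exact ⟨r, h⟩
        rw [hhw, show eQ (x - w) = ((‖x-w‖^2/2 : ℝ) : EReal) from rfl, ← EReal.coe_add] at hw
        have hwlt : hwr + ‖x - w‖^2/2 < PCC.envR L g x + min (c - PCC.envR L g x) (ε^2/2) := by
          exact_mod_cast hw
        have hge : PCC.envR L g x ≤ hwr := by
          have h := hm_le w
          rw [hhw] at h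
          exact_mod_cast h
        have hQsmall : ‖x - w‖^2/2 < min (c - PCC.envR L g x) (ε^2/2) := by linarith
        have hdist : dist w x < ε := by
          rw [dist_eq_norm, ← norm_neg, neg_sub]
          have h2 : ‖x - w‖^2 < ε^2 := by
            have h3 := min_le_right (c - PCC.envR L g x) (ε^2/2)
            nlinarith
          nlinarith [norm_nonneg (x - w)]
        have hcw := hball hdist
        beta_reduce at hcw
        rw [hhw] at hcw
        have hchw : c < hwr := by exact_mod_cast hcw
        have hδle := min_le_left (c - PCC.envR L g x) (ε^2/2)
        have hQ0 : (0:ℝ) ≤ ‖x - w‖^2/2 := by positivity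
        linarith
      calc eConj (fun u : H => (eConj (fun x : H => ((PCC.envR L g x : ℝ) : EReal))) u - eQ u) x ≤ ((PCC.envR L g x : ℝ) : EReal) := hxle
        _ ≤ eConj (fun u : H => (eConj (fun x : H => ((PCC.envR L g x : ℝ) : EReal))) u - eQ u) z := hm_le z
  refine ⟨env_part, ?_, hset⟩
  intro x hx
  have hx' : ∀ z, g (L x) ≤ g z := hx
  show x ∈ {x : H | ∀ z, pccomp L g x ≤ pccomp L g z}
  rw [hset]
  simp only [Set.mem_setOf_eq]
  intro z
  calc eInfConv g eQ (L x) ≤ g (L x) + eQ (L x - L x) := iInf_le _ (L x)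
    _ = g (L x) := by
        rw [sub_self]
        show g (L x) + ((‖(0:G)‖^2/2 : ℝ) : EReal) = g (L x)
        simp
    _ ≤ eInfConv g eQ (L z) := by
        apply le_iInf; intro w
        calc g (L x) ≤ g w := hx' w
          _ ≤ g w + eQ (L z - w) := by
              apply le_add_of_nonneg_right
              show (0:EReal) ≤ ((‖L z - w‖^2/2 : ℝ) : EReal)
              exact_mod_cast (by positivity : (0:ℝ) ≤ ‖L z - w‖^2/2)
end
end
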